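/- arXiv:1008.1737 — 7 statements merged into one kernel-verified Lean document; each statement's English description precedes it below -/
import Mathlib

section
/- Let (R, m, k) be a commutative noetherian local ring with Hilbert series 1 + eτ + (e−1)τ² (i.e., dim_k(m/m²) = e, dim_k(m²/m³) = e−1, and m³ = 0) where e ≥ 2. Then for every element x in m \ m², the ideal (x) has length at most e. -/
/-- The (composition) length of an `R`-module, defined as the supremum of
lengths of strictly increasing chains of submodules. -/
noncomputable def moduleLength (R : Type u) [CommRing R] (M : Type v)
    [AddCommGroup M] [Module R M] : WithBot ℕ∞ :=
  Order.krullDim (Submodule R M)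

/-- Any submodule of `span {x}` not contained in `m²` equals `span {x}`,
for `x ∈ m`. -/
lemma aux_eq_span {R : Type u} [CommRing R] [IsLocalRing R]
    (x : R) (hx : x ∈ IsLocalRing.maximalIdeal R)
    (Q : Submodule R R) (hQ : Q ≤ Ideal.span {x})
    (hQ2 : ¬ Q ≤ (IsLocalRing.maximalIdeal R) ^ 2) : Q = Ideal.span {x} := by
  obtain ⟨a, haQ, ha2⟩ := SetLike.not_le_iff_exists.mp hQ2
  obtain ⟨c, rfl⟩ := Ideal.mem_span_singleton'.mp (hQ haQ)
  have hc : IsUnit c := by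
    by_contra hc
    exact ha2 (by
      rw [pow_two]
      exact Ideal.mul_mem_mul (IsLocalRing.mem_maximalIdeal c |>.mpr hc) hx)
  obtain ⟨u, rfl⟩ := hc
  apply le_antisymm hQ
  rw [Ideal.span_singleton_le_iff_mem]
  have : ((u⁻¹ : Rˣ) : R) • ((u : R) * x) ∈ Q := Q.smul_mem _ haQ
  rwa [smul_eq_mul, ← mul_assoc, Units.inv_mul, one_mul] at this

/-- let `(R, m, k)` be a commutative noetherian local ring with
Hilbert series `1 + eτ + (e-1)τ²` (encoded by: `m³ = 0`, `length R = 2e`,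
`length m² = e - 1`), `e ≥ 2`.  Then for every `x ∈ m \ m²` the ideal `(x)` has
length at most `e`. -/
theorem stmt4 (R : Type u) [CommRing R] [IsNoetherianRing R] [IsLocalRing R]
    (e : ℕ) (he : 2 ≤ e)
    (h3 : (IsLocalRing.maximalIdeal R) ^ 3 = ⊥)
    (hR : moduleLength R R = ((2 * e : ℕ) : WithBot ℕ∞))
    (hm2 : moduleLength R (↥((IsLocalRing.maximalIdeal R) ^ 2)) = ((e - 1 : ℕ) : WithBot ℕ∞))
    (x : R) (hx : x ∈ IsLocalRing.maximalIdeal R)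
    (hx2 : x ∉ (IsLocalRing.maximalIdeal R) ^ 2) :
    moduleLength R (↥(Ideal.span {x})) ≤ ((e : ℕ) : WithBot ℕ∞) := by
  set m2 : Submodule R R := (IsLocalRing.maximalIdeal R) ^ 2 with hm2def
  set N : Submodule R R := Ideal.span {x} with hN
  rw [moduleLength, Order.krullDim_eq_iSup_length]
  rw [show ((e : ℕ) : WithBot ℕ∞) = ((e : ℕ∞) : WithBot ℕ∞) by norm_cast]
  rw [WithBot.coe_le_coe]
  apply iSup_le
  intro p
  rw [Nat.cast_le (α := ℕ∞)] -- reduce to p.length ≤ e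
  by_contra hL
  push_neg at hL
  -- so p.length ≥ e + 1 ≥ 1
  have hL1 : 1 ≤ p.length := le_trans (by omega) hL
  -- all terms except possibly the last are ≤ m2 (as submodules of R)
  have hterm : ∀ i : Fin p.length, (p i.castSucc).map N.subtype ≤ m2 := by
    intro i
    by_contra hc
    have heq : (p i.castSucc).map N.subtype = N :=
      aux_eq_span x hx _ (Submodule.map_subtype_le N _) hc
    have hlt : (p i.castSucc).map N.subtype < (p i.succ).map N.subtype := by
      exact Submodule.map_strictMono_of_injective N.injective_subtype (p.step i)
    have hle : (p i.succ).map N.subtype ≤ N := Submodule.map_subtype_le N _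
    rw [heq] at hlt
    exact lt_irrefl N (lt_of_lt_of_le hlt hle)
  -- build a series of length p.length - 1 in Submodule R m2
  let q : LTSeries (Submodule R m2) := {
    length := p.length - 1
    toFun := fun i => Submodule.comap m2.subtype
      ((p (Fin.castLE (by omega) i).castSucc).map N.subtype)
    step := by
      intro i
      have h1 := hterm (Fin.castLE (by omega) i.castSucc)
      have h2 := hterm (Fin.castLE (by omega) i.succ)
      have hlt : (p (Fin.castLE (by omega) i.castSucc).castSucc).map N.subtype <
          (p (Fin.castLE (by omega) i.succ).castSucc).map N.subtype := by
        apply Submodule.map_strictMono_of_injective N.injective_subtype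
        apply p.strictMono
        simp only [Fin.lt_def, Fin.coe_castSucc, Fin.coe_castLE, Fin.val_succ]
        omega
      show (_ : Submodule R m2) < _
      rw [lt_iff_le_and_ne] at hlt ⊢
      constructor
      · exact Submodule.comap_mono hlt.1
      · intro hcontra
        apply hlt.2
        have := congrArg (Submodule.map m2.subtype) hcontra
        rwa [Submodule.map_comap_subtype, Submodule.map_comap_subtype,
          inf_of_le_right h1, inf_of_le_right h2] at this }
  have hq := Order.LTSeries.length_le_krullDim q
  rw [← moduleLength, hm2] at hq
  have : ((q.length : ℕ∞) : WithBot ℕ∞) ≤ (((e - 1 : ℕ) : ℕ∞) : WithBot ℕ∞) := by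
    exact_mod_cast hq
  rw [WithBot.coe_le_coe, Nat.cast_le] at this
  have h' : p.length - 1 ≤ e - 1 := this
  omega
end

section
/- Let (R, m, k) be a commutative noetherian local ring with Hilbert series 1 + eτ + (e−1)τ², e ≥ 2. For every element x in m \ m² there exists an element w in m \ m² annihilating x; moreover, if such a w generates ann(x), then w and x form an exact pair of zero divisors in R. -/
/-- The annihilator of an element of `R` as an ideal. -/
def annIdeal (R : Type u) [CommRing R] (a : R) : Ideal R :=
  LinearMap.ker (LinearMap.mulLeft R a)

section aux
open Order

lemma my_nat_extract {d : WithBot ℕ∞} {n : ℕ} (h0 : 0 ≤ d) (h : d ≤ ((n:ℕ) : WithBot ℕ∞)) :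
    ∃ m : ℕ, m ≤ n ∧ d = ((m:ℕ) : WithBot ℕ∞) := by
  cases d with
  | bot => simp at h0
  | coe c =>
    have hc : c ≤ (n : ℕ∞) := by
      rw [show ((n:ℕ) : WithBot ℕ∞) = (((n:ℕ∞)) : WithBot ℕ∞) by push_cast; rfl] at h
      exact_mod_cast h
    lift c to ℕ using (lt_of_le_of_lt hc (by simp [lt_top_iff_ne_top])).ne
    exact ⟨c, by exact_mod_cast hc, by push_cast; rfl⟩

lemma my_attain {α : Type*} [Preorder α] {n : ℕ} (h : krullDim α = ((n:ℕ) : WithBot ℕ∞)) :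
    ∃ p : LTSeries α, p.length = n := by
  cases isEmpty_or_nonempty α with
  | inl he => rw [krullDim_eq_bot] at h; simp at h
  | inr hn =>
    rw [krullDim_eq_iSup_length] at h
    have h' : (⨆ (p : LTSeries α), (p.length : ℕ∞)) = (n : ℕ∞) := by exact_mod_cast h
    rcases n with _ | k
    · exact ⟨RelSeries.singleton _ (Classical.arbitrary α), rfl⟩
    · have : ((k:ℕ∞)) < ⨆ (p : LTSeries α), (p.length : ℕ∞) := by
        rw [h']; exact_mod_cast Nat.lt_succ_self k
      obtain ⟨p, hp⟩ := lt_iSup_iff.mp this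
      have hle : (p.length : ℕ∞) ≤ (k+1 : ℕ) := h' ▸ le_iSup (fun (p : LTSeries α) => (p.length : ℕ∞)) p
      have : p.length = k + 1 := le_antisymm (by exact_mod_cast hle) (by exact_mod_cast hp)
      exact ⟨p, this⟩

lemma my_krullDim_le_one {α : Type*} [Preorder α]
    (h : ∀ x y z : α, x < y → y < z → False) : krullDim α ≤ ((1:ℕ) : WithBot ℕ∞) := by
  refine iSup_le fun p => ?_
  have : p.length ≤ 1 := by
    by_contra hlen
    push_neg at hlen
    have i0 : (0:ℕ) < p.length + 1 := by omega
    have i1 : (1:ℕ) < p.length + 1 := by omega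
    have i2 : (2:ℕ) < p.length + 1 := by omega
    exact h (p ⟨0, i0⟩) (p ⟨1, i1⟩) (p ⟨2, i2⟩)
      (p.strictMono (by simp [Fin.lt_def])) (p.strictMono (by simp [Fin.lt_def]))
  exact_mod_cast this

variable {R : Type u} [CommRing R] {M : Type v} [AddCommGroup M] [Module R M]

lemma my_moduleLength_congr {M' : Type w} [AddCommGroup M'] [Module R M'] (e : M ≃ₗ[R] M') :
    moduleLength R M = moduleLength R M' :=
  krullDim_eq_of_orderIso (Submodule.orderIsoMapComap e)

lemma my_moduleLength_mono {N N' : Submodule R M} (h : N ≤ N') :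
    moduleLength R N ≤ moduleLength R N' :=
  krullDim_le_of_strictMono (Submodule.map (Submodule.inclusion h))
    (Submodule.map_strictMono_of_injective (Submodule.inclusion_injective h))

lemma my_moduleLength_quot_le (N : Submodule R M) :
    moduleLength R (M ⧸ N) ≤ moduleLength R M :=
  krullDim_le_of_strictMono (Submodule.comap N.mkQ)
    (Submodule.comap_strictMono_of_surjective N.mkQ_surjective)

lemma my_moduleLength_strict {N N' : Submodule R M}
    (h : N < N') {n : ℕ} (hN : moduleLength R N = ((n:ℕ) : WithBot ℕ∞)) :
    ((n+1:ℕ) : WithBot ℕ∞) ≤ moduleLength R N' := by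
  obtain ⟨p, hp⟩ := my_attain (α := Submodule R N) hN
  let q := p.map (Submodule.map (Submodule.inclusion h.le))
    (Submodule.map_strictMono_of_injective (Submodule.inclusion_injective h.le))
  have hlast : q.last < ⊤ := by
    have h1 : q.last ≤ Submodule.map (Submodule.inclusion h.le) ⊤ :=
      Submodule.map_mono le_top
    have h2 : Submodule.map (Submodule.inclusion h.le) ⊤ ≠ ⊤ := by
      rw [Submodule.map_top, Submodule.range_inclusion]
      intro hT
      exact h.ne (le_antisymm h.le (Submodule.comap_subtype_eq_top.mp hT))
    exact lt_of_le_of_lt h1 (lt_top_iff_ne_top.mpr h2)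
  have := LTSeries.length_le_krullDim (q.snoc ⊤ hlast)
  have hlen : (q.snoc ⊤ hlast).length = n + 1 := by
    show p.length + 0 + 1 = n + 1
    omega
  rw [hlen] at this
  exact_mod_cast this

lemma my_eq_of_pieces {N U V : Submodule R M} (hle : U ≤ V)
    (h1 : Submodule.comap N.subtype U = Submodule.comap N.subtype V)
    (h2 : Submodule.map N.mkQ U = Submodule.map N.mkQ V) : U = V := by
  have e1 : N ⊓ U = N ⊓ V := by
    have := congrArg (Submodule.map N.subtype) h1
    rwa [Submodule.map_comap_subtype, Submodule.map_comap_subtype] at this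
  have e2 : U ⊔ N = V ⊔ N := by
    have := congrArg (Submodule.comap N.mkQ) h2
    rwa [Submodule.comap_map_eq, Submodule.comap_map_eq, Submodule.ker_mkQ] at this
  have h3 : V = (U ⊔ N) ⊓ V := by
    rw [inf_eq_right.mpr (e2 ▸ le_sup_left)]
  rw [sup_inf_assoc_of_le _ hle] at h3
  exact (h3.trans (by rw [← e1, inf_comm, sup_inf_self])).symm

lemma my_exists_chains (N : Submodule R M) (n : ℕ) :
    ∀ (p : LTSeries (Submodule R M)), p.length = n →
    ∃ (c1 : LTSeries (Submodule R ↥N)) (c2 : LTSeries (Submodule R (M ⧸ N))),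
      c1.last = Submodule.comap N.subtype p.last ∧ c2.last = Submodule.map N.mkQ p.last ∧
      p.length ≤ c1.length + c2.length := by
  induction n with
  | zero =>
    intro p hp
    exact ⟨RelSeries.singleton _ _, RelSeries.singleton _ _, rfl, rfl, by omega⟩
  | succ n ih =>
    intro p hp
    have hne : p.length ≠ 0 := by omega
    have hlt : p.eraseLast.last < p.last := p.eraseLast_last_rel_last hne
    obtain ⟨c1, c2, hc1, hc2, hlen⟩ := ih p.eraseLast (by simp [hp])
    have hmono1 : Submodule.comap N.subtype p.eraseLast.last ≤ Submodule.comap N.subtype p.last :=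
      Submodule.comap_mono hlt.le
    have hmono2 : Submodule.map N.mkQ p.eraseLast.last ≤ Submodule.map N.mkQ p.last :=
      Submodule.map_mono hlt.le
    by_cases h1 : Submodule.comap N.subtype p.eraseLast.last < Submodule.comap N.subtype p.last
    · by_cases h2 : Submodule.map N.mkQ p.eraseLast.last < Submodule.map N.mkQ p.last
      · exact ⟨c1.snoc _ (hc1 ▸ h1), c2.snoc _ (hc2 ▸ h2), by simp, by simp,
          by show p.length ≤ c1.length + 0 + 1 + (c2.length + 0 + 1); simp [RelSeries.snoc] at *; omega⟩
      · have h2' : Submodule.map N.mkQ p.eraseLast.last = Submodule.map N.mkQ p.last :=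
          ((lt_or_eq_of_le hmono2).resolve_left h2)
        exact ⟨c1.snoc _ (hc1 ▸ h1), c2, by simp, by rw [hc2, h2'],
          by show p.length ≤ c1.length + 0 + 1 + c2.length; simp [RelSeries.snoc] at *; omega⟩
    · have h1' : Submodule.comap N.subtype p.eraseLast.last = Submodule.comap N.subtype p.last :=
        ((lt_or_eq_of_le hmono1).resolve_left h1)
      have h2 : Submodule.map N.mkQ p.eraseLast.last < Submodule.map N.mkQ p.last := by
        rcases lt_or_eq_of_le hmono2 with h | h
        · exact h
        · exact absurd (my_eq_of_pieces hlt.le h1' h) hlt.ne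
      exact ⟨c1, c2.snoc _ (hc2 ▸ h2), by rw [hc1, h1'], by simp,
        by show p.length ≤ c1.length + (c2.length + 0 + 1); simp [RelSeries.snoc] at *; omega⟩

lemma my_moduleLength_le_add (N : Submodule R M) :
    moduleLength R M ≤ moduleLength R ↥N + moduleLength R (M ⧸ N) := by
  refine iSup_le fun p => ?_
  obtain ⟨c1, c2, _, _, hlen⟩ := my_exists_chains N p.length p rfl
  calc ((p.length : ℕ∞) : WithBot ℕ∞) ≤ ((c1.length + c2.length : ℕ) : WithBot ℕ∞) := by
        exact_mod_cast hlen
    _ = ((c1.length : ℕ∞) : WithBot ℕ∞) + ((c2.length : ℕ∞) : WithBot ℕ∞) := by push_cast; rfl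
    _ ≤ _ := add_le_add (LTSeries.length_le_krullDim c1) (LTSeries.length_le_krullDim c2)

lemma my_moduleLength_add_le (N : Submodule R M) {a b : ℕ}
    (ha : moduleLength R ↥N = ((a:ℕ) : WithBot ℕ∞))
    (hb : moduleLength R (M ⧸ N) = ((b:ℕ) : WithBot ℕ∞)) :
    ((a + b : ℕ) : WithBot ℕ∞) ≤ moduleLength R M := by
  obtain ⟨p, hp⟩ := my_attain ha
  obtain ⟨q, hq⟩ := my_attain hb
  let p' : LTSeries (Submodule R M) := p.map (Submodule.map N.subtype)
    (Submodule.map_strictMono_of_injective N.injective_subtype)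
  let q' : LTSeries (Submodule R M) := q.map (Submodule.comap N.mkQ)
    (Submodule.comap_strictMono_of_surjective N.mkQ_surjective)
  have hplast : p'.last ≤ N := by
    have h0 : p'.last = Submodule.map N.subtype p.last := rfl
    rw [h0]
    calc Submodule.map N.subtype p.last ≤ Submodule.map N.subtype ⊤ := Submodule.map_mono le_top
      _ = N := by rw [Submodule.map_top, Submodule.range_subtype]
  have hqhead : N ≤ q'.head := by
    have h0 : q'.head = Submodule.comap N.mkQ q.head := rfl
    rw [h0]
    calc N = Submodule.comap N.mkQ ⊥ := by rw [Submodule.comap_bot, Submodule.ker_mkQ]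
      _ ≤ _ := Submodule.comap_mono bot_le
  have hle : p'.last ≤ q'.head := hplast.trans hqhead
  rcases lt_or_eq_of_le hle with h | h
  · have := LTSeries.length_le_krullDim (p'.append q' h)
    have hL : (p'.append q' h).length = a + b + 1 := by
      simp [RelSeries.append, p', q', hp, hq]
    rw [hL] at this
    refine le_trans ?_ this
    exact_mod_cast Nat.le_succ (a+b)
  · have := LTSeries.length_le_krullDim (p'.smash q' h)
    have hL : (p'.smash q' h).length = a + b := by
      simp [RelSeries.smash, p', q', hp, hq]
    rw [hL] at this
    exact_mod_cast this

lemma my_wb_le {a b : ℕ} : ((a:ℕ) : WithBot ℕ∞) ≤ ((b:ℕ) : WithBot ℕ∞) ↔ a ≤ b := by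
  constructor <;> intro h <;> exact_mod_cast h

lemma my_wb_inj {a b : ℕ} (h : ((a:ℕ) : WithBot ℕ∞) = ((b:ℕ) : WithBot ℕ∞)) : a = b := by
  exact_mod_cast h

/-- Length decomposition for an ideal of `R` when `length R = L`. -/
lemma my_decomp {R : Type u} [CommRing R] {L : ℕ}
    (hR : moduleLength R R = ((L:ℕ) : WithBot ℕ∞)) (I : Ideal R) :
    ∃ a b : ℕ, moduleLength R ↥I = ((a:ℕ) : WithBot ℕ∞) ∧
      moduleLength R (R ⧸ I) = ((b:ℕ) : WithBot ℕ∞) ∧ a + b = L := by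
  have htop : moduleLength R ↥(⊤ : Ideal R) = moduleLength R R :=
    my_moduleLength_congr Submodule.topEquiv
  have hIle : moduleLength R ↥I ≤ ((L:ℕ) : WithBot ℕ∞) := by
    calc moduleLength R ↥I ≤ moduleLength R ↥(⊤ : Ideal R) := my_moduleLength_mono le_top
      _ = _ := htop.trans hR
  have hQle : moduleLength R (R ⧸ I) ≤ ((L:ℕ) : WithBot ℕ∞) :=
    (my_moduleLength_quot_le I).trans hR.le
  obtain ⟨a, _, ha⟩ := my_nat_extract krullDim_nonneg hIle
  obtain ⟨b, _, hb⟩ := my_nat_extract krullDim_nonneg hQle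
  refine ⟨a, b, ha, hb, le_antisymm ?_ ?_⟩
  · exact my_wb_le.mp ((my_moduleLength_add_le I ha hb).trans hR.le)
  · refine my_wb_le.mp ?_
    calc ((L:ℕ) : WithBot ℕ∞) = moduleLength R R := hR.symm
      _ ≤ moduleLength R ↥I + moduleLength R (R ⧸ I) := my_moduleLength_le_add I
      _ = ((a + b : ℕ) : WithBot ℕ∞) := by
          rw [show moduleLength R ↥I = ((a:ℕ) : WithBot ℕ∞) from ha,
            show moduleLength R (R ⧸ I) = ((b:ℕ) : WithBot ℕ∞) from hb]
          push_cast; rfl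

/-- First isomorphism theorem: `R ⧸ ann(y) ≃ (y)`. -/
lemma my_quot_ann {R : Type u} [CommRing R] (y : R) :
    moduleLength R (R ⧸ annIdeal R y) = moduleLength R ↥(Ideal.span {y}) := by
  have hrange : LinearMap.range (LinearMap.mulLeft R y) = Ideal.span {y} := by
    ext z
    simp only [LinearMap.mem_range, LinearMap.mulLeft_apply, Ideal.mem_span_singleton']
    exact ⟨fun ⟨c, hc⟩ => ⟨c, by rw [mul_comm]; exact hc⟩, fun ⟨c, hc⟩ => ⟨c, by rw [mul_comm]; exact hc⟩⟩
  have := my_moduleLength_congr (R := R) (LinearMap.quotKerEquivRange (LinearMap.mulLeft R y))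
  rw [hrange] at this
  exact this

end aux

/-- let `(R, m, k)` be a commutative noetherian local ring with
Hilbert series `1 + eτ + (e-1)τ²` (encoded by: `m³ = 0`, `length R = 2e`,
`length m² = e - 1`), `e ≥ 2`.  For every `x ∈ m \ m²` there is `w ∈ m \ m²`
with `wx = 0`; moreover any `w` generating `ann(x)` forms with `x` an exact
pair of zero divisors. -/
theorem stmt5 (R : Type u) [CommRing R] [IsNoetherianRing R] [IsLocalRing R]
    (e : ℕ) (he : 2 ≤ e)
    (h3 : (IsLocalRing.maximalIdeal R) ^ 3 = ⊥)
    (hR : moduleLength R R = ((2 * e : ℕ) : WithBot ℕ∞))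
    (hm2 : moduleLength R (↥((IsLocalRing.maximalIdeal R) ^ 2)) = ((e - 1 : ℕ) : WithBot ℕ∞))
    (x : R) (hx : x ∈ IsLocalRing.maximalIdeal R)
    (hx2 : x ∉ (IsLocalRing.maximalIdeal R) ^ 2) :
    (∃ w, w ∈ IsLocalRing.maximalIdeal R ∧ w ∉ (IsLocalRing.maximalIdeal R) ^ 2 ∧
        w * x = 0) ∧
    (∀ w, w ∈ IsLocalRing.maximalIdeal R → w ∉ (IsLocalRing.maximalIdeal R) ^ 2 →
      annIdeal R x = Ideal.span {w} → annIdeal R w = Ideal.span {x}) := by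
  set m := IsLocalRing.maximalIdeal R with hm
  -- decomposition for ann(x)
  obtain ⟨aA, bA, hA1, hA2, hAsum⟩ := my_decomp hR (annIdeal R x)
  have hA2' : moduleLength R ↥(Ideal.span {x}) = ((bA:ℕ) : WithBot ℕ∞) :=
    (my_quot_ann x).symm.trans hA2
  -- span x has length ≤ e
  have hspanx_le : moduleLength R ↥(Ideal.span {x}) ≤ ((e:ℕ) : WithBot ℕ∞) := by
    set S : Ideal R := Ideal.span {x} with hS
    set T : Submodule R ↥S := Submodule.comap S.subtype (m ^ 2 ⊓ S) with hT
    have hT_len : moduleLength R ↥T ≤ (((e-1):ℕ) : WithBot ℕ∞) := by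
      have h1 : moduleLength R ↥T = moduleLength R ↥(m ^ 2 ⊓ S) :=
        my_moduleLength_congr (Submodule.comapSubtypeEquivOfLe inf_le_right)
      rw [h1]
      exact (my_moduleLength_mono inf_le_left).trans hm2.le
    have hQ_len : moduleLength R (↥S ⧸ T) ≤ ((1:ℕ) : WithBot ℕ∞) := by
      refine my_krullDim_le_one ?_
      have hdich : ∀ U : Submodule R (↥S ⧸ T), U = ⊥ ∨ U = ⊤ := by
        intro U
        by_cases hU : U = ⊥
        · exact Or.inl hU
        · right
          obtain ⟨u, huU, hu0⟩ := Submodule.exists_mem_ne_zero_of_ne_bot hU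
          obtain ⟨s, rfl⟩ := Submodule.Quotient.mk_surjective T u
          obtain ⟨r, hr⟩ := Ideal.mem_span_singleton'.mp s.2
          have hxS : x ∈ S := Ideal.mem_span_singleton_self x
          by_cases hrm : r ∈ m
          · exfalso
            apply hu0
            rw [Submodule.Quotient.mk_eq_zero]
            rw [hT]
            refine Submodule.mem_comap.mpr (Submodule.mem_inf.mpr ⟨?_, s.2⟩)
            show (s : R) ∈ m ^ 2
            rw [← hr, sq]
            exact Ideal.mul_mem_mul hrm hx
          · have hru : IsUnit r := by
              by_contra hc
              exact hrm ((IsLocalRing.mem_maximalIdeal r).mpr (mem_nonunits_iff.mpr hc))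
            obtain ⟨ru, hru'⟩ := hru
            have hs_eq : s = ru • (⟨x, hxS⟩ : ↥S) := by
              apply Subtype.ext
              show (s : R) = ru • x
              rw [← hr, Units.smul_def, smul_eq_mul, hru']
            have hxbar : Submodule.Quotient.mk (⟨x, hxS⟩ : ↥S) ∈ U := by
              have : (Submodule.Quotient.mk s : ↥S ⧸ T) = ru • Submodule.Quotient.mk (⟨x, hxS⟩ : ↥S) := by
                rw [hs_eq, Submodule.Quotient.mk_smul]
              have h2 : Submodule.Quotient.mk (⟨x, hxS⟩ : ↥S) = ru⁻¹ • (Submodule.Quotient.mk s : ↥S ⧸ T) := by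
                rw [this, smul_smul]
                simp
              rw [h2]
              exact Submodule.smul_mem _ _ huU
            rw [eq_top_iff]
            intro v _
            obtain ⟨t, rfl⟩ := Submodule.Quotient.mk_surjective T v
            obtain ⟨c, hc⟩ := Ideal.mem_span_singleton'.mp t.2
            have ht_eq : t = c • (⟨x, hxS⟩ : ↥S) := by
              apply Subtype.ext
              show (t : R) = c • x
              rw [← hc, smul_eq_mul]
            rw [ht_eq, Submodule.Quotient.mk_smul]
            exact Submodule.smul_mem _ _ hxbar
      intro a b c hab hbc
      rcases hdich b with rfl | rfl
      · exact not_lt_bot hab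
      · exact not_top_lt hbc
    calc moduleLength R ↥S ≤ moduleLength R ↥T + moduleLength R (↥S ⧸ T) :=
          my_moduleLength_le_add T
      _ ≤ (((e-1):ℕ) : WithBot ℕ∞) + ((1:ℕ) : WithBot ℕ∞) := add_le_add hT_len hQ_len
      _ = ((e:ℕ) : WithBot ℕ∞) := by
          rw [show (((e-1):ℕ) : WithBot ℕ∞) + ((1:ℕ) : WithBot ℕ∞) = (((e-1+1):ℕ) : WithBot ℕ∞) by push_cast; rfl]
          congr 1
          omega
  have hbA_le : bA ≤ e := my_wb_le.mp (hA2' ▸ hspanx_le)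
  have haA_ge : e ≤ aA := by omega
  -- m^2 ≤ ann(x)
  have hm2A : m ^ 2 ≤ annIdeal R x := by
    intro z hz
    have hzx : x * z ∈ m ^ 3 := by
      rw [pow_succ']
      exact Ideal.mul_mem_mul hx hz
    rw [h3] at hzx
    exact LinearMap.mem_ker.mpr ((Submodule.mem_bot R).mp hzx)
  constructor
  · -- existence of w
    have hne : ¬ annIdeal R x ≤ m ^ 2 := by
      intro hle
      have heq : annIdeal R x = m ^ 2 := le_antisymm hle hm2A
      rw [heq] at hA1
      have := my_wb_inj (hA1.symm.trans hm2)
      omega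
    obtain ⟨w, hwA, hwm2⟩ := SetLike.not_le_iff_exists.mp hne
    have hxw : x * w = 0 := hwA
    have hwm : w ∈ m := by
      by_contra hw
      have hu : IsUnit w := by
        by_contra hc
        exact hw ((IsLocalRing.mem_maximalIdeal w).mpr (mem_nonunits_iff.mpr hc))
      have : x = 0 := by
        rw [mul_comm] at hxw
        exact (hu.mul_right_eq_zero).mp (mul_comm w x ▸ hxw)
      exact hx2 (this ▸ Submodule.zero_mem _)
    exact ⟨w, hwm, hwm2, by rw [mul_comm]; exact hxw⟩
  · -- exact pair
    intro w _ _ hgen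
    obtain ⟨a', b', hB1, hB2, hBsum⟩ := my_decomp hR (annIdeal R w)
    have hB2' : moduleLength R ↥(Ideal.span {w}) = ((b':ℕ) : WithBot ℕ∞) :=
      (my_quot_ann w).symm.trans hB2
    rw [← hgen] at hB2'
    have hb' : b' = aA := my_wb_inj (hB2'.symm.trans hA1)
    have ha' : a' = bA := by omega
    have hxw : w * x = 0 := by
      have hwA : w ∈ annIdeal R x := hgen ▸ Ideal.mem_span_singleton_self w
      have : x * w = 0 := hwA
      rw [mul_comm]; exact this
    have hsub : Ideal.span {x} ≤ annIdeal R w := by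
      rw [Ideal.span_le, Set.singleton_subset_iff]
      exact LinearMap.mem_ker.mpr hxw
    by_contra hne
    have hlt : Ideal.span {x} < annIdeal R w := lt_of_le_of_ne hsub (fun h => hne h.symm)
    have hstep := my_moduleLength_strict hlt hA2'
    rw [hB1] at hstep
    have := my_wb_le.mp hstep
    omega
end

section
/- Let (R, m, k) be a commutative noetherian local ring with Hilbert series 1 + eτ + (e−1)τ², e ≥ 2. If w and x are elements of R satisfying wx = 0, wm = m², and xm = m², then w and x form an exact pair of zero divisors in R. -/
section Auxiliary

open Module

/-- Cast comparison helper. -/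
lemma withBot_natCast_le {a b : ℕ} :
    ((a : ℕ) : WithBot ℕ∞) ≤ ((b : ℕ) : WithBot ℕ∞) ↔ a ≤ b :=
  ⟨fun h => by exact_mod_cast h, fun h => by exact_mod_cast h⟩

lemma withBot_natCast_inj {a b : ℕ} :
    ((a : ℕ) : WithBot ℕ∞) = ((b : ℕ) : WithBot ℕ∞) ↔ a = b :=
  ⟨fun h => by exact_mod_cast h, fun h => by exact_mod_cast h⟩

variable {K : Type*} [Field K] {V : Type*} [AddCommGroup V] [Module K V]

/-- In a finite dimensional space there is a full flag. -/
lemma aux_exists_ltSeries [FiniteDimensional K V] :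
    ∃ p : LTSeries (Submodule K V),
      p.length = finrank K V ∧ p.head = ⊥ ∧ p.last = ⊤ := by
  classical
  let b : Basis (Fin (finrank K V)) K V := Module.finBasis K V
  refine ⟨⟨finrank K V,
      fun i => Submodule.span K (b '' {j : Fin (finrank K V) | (j : ℕ) < (i : ℕ)}), ?_⟩,
      rfl, ?_, ?_⟩
  · intro i
    refine lt_of_le_of_ne (Submodule.span_mono (Set.image_mono ?_)) ?_
    · intro j hj
      simp only [Set.mem_setOf_eq, Fin.coe_castSucc] at hj
      simp only [Set.mem_setOf_eq, Fin.val_succ]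
      omega
    · intro hEq
      beta_reduce at hEq
      have hmem : b i ∈ Submodule.span K
          (b '' {j : Fin (finrank K V) | (j : ℕ) < ((i.succ : Fin (finrank K V + 1)) : ℕ)}) :=
        Submodule.subset_span ⟨i, by simp, rfl⟩
      rw [← hEq] at hmem
      exact b.linearIndependent.notMem_span_image (by simp) hmem
  · show Submodule.span K _ = ⊥
    convert Submodule.span_empty (R := K) (M := V)
    simp
  · show Submodule.span K _ = ⊤
    have : {j : Fin (finrank K V) | (j : ℕ) < ((Fin.last (finrank K V) : Fin (finrank K V + 1)) : ℕ)}
        = Set.univ := by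
      ext j; simpa using j.isLt
    rw [this, Set.image_univ, Basis.span_eq]

/-- Chains of subspaces are no longer than the dimension. -/
lemma aux_length_le [FiniteDimensional K V] (p : LTSeries (Submodule K V)) :
    p.length ≤ finrank K V := by
  have key : ∀ i : Fin (p.length + 1), (i : ℕ) ≤ finrank K (p i) := by
    intro i
    induction i using Fin.induction with
    | zero => simp
    | succ i ih =>
      have h1 : finrank K (p i.castSucc) < finrank K (p i.succ) :=
        Submodule.finrank_lt_finrank_of_lt (p.step i)
      simp only [Fin.coe_castSucc] at ih
      simp only [Fin.val_succ]
      omega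
  have h2 := key (Fin.last _)
  have h3 : finrank K (p (Fin.last _)) ≤ finrank K V := Submodule.finrank_le _
  simpa using h2.trans h3

/-- The Krull dimension of the submodule lattice of a finite dimensional vector
space is its dimension. -/
lemma aux_krullDim_eq [FiniteDimensional K V] :
    Order.krullDim (Submodule K V) = ((finrank K V : ℕ) : WithBot ℕ∞) := by
  obtain ⟨p, hlen, -, -⟩ := aux_exists_ltSeries (K := K) (V := V)
  apply le_antisymm
  · rw [Order.krullDim_eq_iSup_length]
    have h : (⨆ q : LTSeries (Submodule K V), (q.length : ℕ∞)) ≤ (finrank K V : ℕ∞) :=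
      iSup_le fun q => by exact_mod_cast aux_length_le q
    exact_mod_cast h
  · have h := Order.LTSeries.length_le_krullDim p
    rwa [hlen] at h

/-- Submodule lattices agree along surjections of base rings. -/
lemma aux_krullDim_restrict (R K : Type*) [CommRing R] [CommRing K] [Algebra R K]
    (hsur : Function.Surjective (algebraMap R K))
    (M : Type*) [AddCommGroup M] [Module R M] [Module K M] [IsScalarTower R K M] :
    Order.krullDim (Submodule K M) = Order.krullDim (Submodule R M) := by
  let g : Submodule R M → Submodule K M := fun p =>
    { carrier := p
      add_mem' := fun h1 h2 => p.add_mem h1 h2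
      zero_mem' := p.zero_mem
      smul_mem' := by
        intro c v hv
        obtain ⟨c₀, rfl⟩ := hsur c
        rw [algebraMap_smul]
        exact p.smul_mem c₀ hv }
  have hg : StrictMono g := by
    intro p q h
    refine lt_of_le_of_ne (fun v hv => h.le hv) fun hh => h.ne ?_
    ext v
    exact SetLike.ext_iff.mp hh v
  exact le_antisymm
    (Order.krullDim_le_of_strictMono _ (Submodule.restrictScalarsEmbedding R K M).strictMono)
    (Order.krullDim_le_of_strictMono g hg)

lemma aux_strictMono_mapSubtype {R M : Type*} [Ring R] [AddCommGroup M] [Module R M]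
    (p : Submodule R M) :
    StrictMono (Submodule.map p.subtype) := fun a b h =>
  lt_of_le_of_ne (Submodule.map_mono h.le) fun hh =>
    h.ne (Submodule.map_injective_of_injective p.injective_subtype hh)

lemma aux_strictMono_comapMkQ {R M : Type*} [Ring R] [AddCommGroup M] [Module R M]
    (T : Submodule R M) :
    StrictMono (Submodule.comap T.mkQ) := by
  intro a b h
  refine lt_of_le_of_ne (Submodule.comap_mono h.le) fun hh => h.ne ?_
  have h2 := congrArg (Submodule.map T.mkQ) hh
  rwa [Submodule.map_comap_eq_of_surjective (Submodule.mkQ_surjective T),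
    Submodule.map_comap_eq_of_surjective (Submodule.mkQ_surjective T)] at h2

end Auxiliary

section Basics

open IsLocalRing

variable (R : Type u) [CommRing R] [IsLocalRing R]

lemma aux_m2_ne_bot [IsNoetherianRing R] (e : ℕ) (he : 2 ≤ e)
    (hm2 : moduleLength R (↥((IsLocalRing.maximalIdeal R) ^ 2)) = ((e - 1 : ℕ) : WithBot ℕ∞)) :
    (maximalIdeal R) ^ 2 ≠ ⊥ := by
  intro hbot
  rw [hbot] at hm2
  have hsub : Subsingleton (↥(⊥ : Ideal R)) :=
    ⟨fun a b => Subtype.ext (by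
      rw [(Submodule.mem_bot R).mp a.2, (Submodule.mem_bot R).mp b.2])⟩
  have hsub2 : Subsingleton (Submodule R ↥(⊥ : Ideal R)) :=
    (Submodule.subsingleton_iff R).mpr hsub
  have h0 : Order.krullDim (Submodule R ↥(⊥ : Ideal R)) ≤ 0 :=
    Order.krullDim_nonpos_of_subsingleton
  unfold moduleLength at hm2
  rw [hm2] at h0
  have : (e - 1 : ℕ) ≤ (0 : ℕ) := withBot_natCast_le.mp (by simpa using h0)
  omega

lemma aux_ne_zero (m2ne : (maximalIdeal R) ^ 2 ≠ ⊥) {x : R}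
    (hx : Ideal.span {x} * maximalIdeal R = (maximalIdeal R) ^ 2) : x ≠ 0 := by
  rintro rfl
  apply m2ne
  rw [← hx, Ideal.span_singleton_eq_bot.mpr rfl]
  simp

lemma aux_not_unit (m2ne : (maximalIdeal R) ^ 2 ≠ ⊥)
    (h3 : (maximalIdeal R) ^ 3 = ⊥) {x : R}
    (hx : Ideal.span {x} * maximalIdeal R = (maximalIdeal R) ^ 2) : ¬ IsUnit x := by
  intro hu
  have htop : Ideal.span {x} = ⊤ := Ideal.span_singleton_eq_top.mpr hu
  rw [htop, Ideal.top_mul] at hx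
  apply m2ne
  calc (maximalIdeal R) ^ 2 = maximalIdeal R * maximalIdeal R := pow_two _
    _ = maximalIdeal R * (maximalIdeal R) ^ 2 := by rw [← hx]
    _ = (maximalIdeal R) ^ 3 := by ring
    _ = ⊥ := h3

lemma aux_not_mem_sq (m2ne : (maximalIdeal R) ^ 2 ≠ ⊥)
    (h3 : (maximalIdeal R) ^ 3 = ⊥) {x : R}
    (hx : Ideal.span {x} * maximalIdeal R = (maximalIdeal R) ^ 2) :
    x ∉ (maximalIdeal R) ^ 2 := by
  intro hmem
  apply m2ne
  have h1 : Ideal.span {x} ≤ (maximalIdeal R) ^ 2 :=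
    Ideal.span_le.mpr (by simpa using hmem)
  have h2 : (maximalIdeal R) ^ 2 ≤ (maximalIdeal R) ^ 3 := by
    calc (maximalIdeal R) ^ 2 = Ideal.span {x} * maximalIdeal R := hx.symm
      _ ≤ (maximalIdeal R) ^ 2 * maximalIdeal R := Ideal.mul_mono_left h1
      _ = (maximalIdeal R) ^ 3 := (pow_succ _ 2).symm
  rw [h3] at h2
  exact le_bot_iff.mp h2

end Basics

section Key

open IsLocalRing Module

/-- The key step: the annihilator of `x` is contained in `(w)`. -/
lemma aux_key (R : Type u) [CommRing R] [IsNoetherianRing R] [IsLocalRing R]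
    (e : ℕ) (he : 2 ≤ e)
    (h3 : (IsLocalRing.maximalIdeal R) ^ 3 = ⊥)
    (hR : moduleLength R R = ((2 * e : ℕ) : WithBot ℕ∞))
    (hm2 : moduleLength R (↥((IsLocalRing.maximalIdeal R) ^ 2)) = ((e - 1 : ℕ) : WithBot ℕ∞))
    (w x : R) (hwx : w * x = 0)
    (hw : Ideal.span {w} * IsLocalRing.maximalIdeal R = (IsLocalRing.maximalIdeal R) ^ 2)
    (hx : Ideal.span {x} * IsLocalRing.maximalIdeal R = (IsLocalRing.maximalIdeal R) ^ 2) :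
    annIdeal R x ≤ Ideal.span {w} := by
  classical
  have m2ne : (maximalIdeal R) ^ 2 ≠ ⊥ := aux_m2_ne_bot R e he hm2
  have hx0 : x ≠ 0 := aux_ne_zero R m2ne hx
  have hxu : ¬ IsUnit x := aux_not_unit R m2ne h3 hx
  have hwu : ¬ IsUnit w := aux_not_unit R m2ne h3 hw
  have hxm : x ∈ maximalIdeal R := (mem_maximalIdeal x).mpr hxu
  have hwm : w ∈ maximalIdeal R := (mem_maximalIdeal w).mpr hwu
  have hwm2 : w ∉ (maximalIdeal R) ^ 2 := aux_not_mem_sq R m2ne h3 hw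
  have hm2w : (maximalIdeal R) ^ 2 ≤ Ideal.span {w} := by
    rw [← hw]; exact Ideal.mul_le.2 fun _ hr _ _ => Ideal.mul_mem_right _ _ hr
  -- the modules
  set m : Ideal R := maximalIdeal R with hm
  let M2 := ↥(m ^ 2)
  let T : Submodule R ↥m := m • ⊤
  let V := ↥m ⧸ T
  let K := R ⧸ m
  letI : Field K := Ideal.Quotient.field m
  have hsur : Function.Surjective (algebraMap R K) := by
    rw [Ideal.Quotient.algebraMap_eq]
    exact Ideal.Quotient.mk_surjective
  have torM2 : Module.IsTorsionBySet R M2 (m : Set R) := by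
    rintro z ⟨c, hc⟩
    apply Subtype.ext
    show c • (z : R) = 0
    have hmem : (z : R) * c ∈ m ^ 3 := by
      rw [pow_succ]
      exact Ideal.mul_mem_mul z.2 hc
    rw [h3] at hmem
    rw [smul_eq_mul, mul_comm]
    simpa using hmem
  have torV : Module.IsTorsionBySet R V (m : Set R) := by
    rintro z ⟨c, hc⟩
    obtain ⟨y, rfl⟩ := Submodule.mkQ_surjective T z
    rw [← map_smul, Submodule.mkQ_apply, Submodule.Quotient.mk_eq_zero]
    exact Submodule.smul_mem_smul hc Submodule.mem_top
  letI : Module K M2 := torM2.module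
  letI : Module K V := torV.module
  letI : IsScalarTower R K M2 := torM2.isScalarTower
  letI : IsScalarTower R K V := torV.isScalarTower
  haveI : Module.Finite R M2 := Module.Finite.iff_fg.mpr (IsNoetherian.noetherian _)
  haveI : Module.Finite R ↥m := Module.Finite.iff_fg.mpr (IsNoetherian.noetherian _)
  haveI : Module.Finite R V := Module.Finite.of_surjective T.mkQ (Submodule.mkQ_surjective T)
  haveI : Module.Finite K M2 := Module.Finite.of_restrictScalars_finite R K M2
  haveI : Module.Finite K V := Module.Finite.of_restrictScalars_finite R K V
  -- dimension of m²
  have hdW : finrank K M2 = e - 1 := by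
    have h1 := aux_krullDim_restrict R K hsur M2
    have h2 := aux_krullDim_eq (K := K) (V := M2)
    unfold moduleLength at hm2
    have h4 : ((finrank K M2 : ℕ) : WithBot ℕ∞) = ((e - 1 : ℕ) : WithBot ℕ∞) := by
      rw [← h2, h1]; exact hm2
    exact withBot_natCast_inj.mp h4
  -- chains: dim V ≤ e
  have hTmap : Submodule.map m.subtype T = m ^ 2 := by
    show Submodule.map m.subtype (m • ⊤) = m ^ 2
    rw [Submodule.map_smul'', Submodule.map_top, Submodule.range_subtype,
      Ideal.smul_eq_mul, ← pow_two]
  set dV := finrank K V with hdVdef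
  obtain ⟨p, hp_len, hp_head, hp_last⟩ := aux_exists_ltSeries (K := K) (V := M2)
  obtain ⟨q, hq_len, hq_head, hq_last⟩ := aux_exists_ltSeries (K := K) (V := V)
  let F2 : Submodule K M2 → Ideal R := fun W =>
    Submodule.map (m ^ 2).subtype (W.restrictScalars R)
  have hF2 : StrictMono F2 :=
    (aux_strictMono_mapSubtype _).comp (Submodule.restrictScalarsEmbedding R K M2).strictMono
  let FV : Submodule K V → Ideal R := fun W =>
    Submodule.map m.subtype (Submodule.comap T.mkQ (W.restrictScalars R))
  have hFV : StrictMono FV :=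
    ((aux_strictMono_mapSubtype _).comp (aux_strictMono_comapMkQ T)).comp
      (Submodule.restrictScalarsEmbedding R K V).strictMono
  have hF2_top : F2 ⊤ = m ^ 2 := by
    show Submodule.map (m ^ 2).subtype ((⊤ : Submodule K M2).restrictScalars R) = m ^ 2
    rw [Submodule.restrictScalars_top, Submodule.map_subtype_top]
  have hFV_bot : FV ⊥ = m ^ 2 := by
    show Submodule.map m.subtype
      (Submodule.comap T.mkQ ((⊥ : Submodule K V).restrictScalars R)) = m ^ 2
    rw [Submodule.restrictScalars_bot, Submodule.comap_bot, Submodule.ker_mkQ]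
    exact hTmap
  have hFV_top : FV ⊤ = m := by
    show Submodule.map m.subtype
      (Submodule.comap T.mkQ ((⊤ : Submodule K V).restrictScalars R)) = m
    rw [Submodule.restrictScalars_top, Submodule.comap_top, Submodule.map_subtype_top]
  let c1 := p.map F2 hF2
  have hc2snoc : (q.map FV hFV).last < (⊤ : Ideal R) := by
    rw [LTSeries.last_map, hq_last, hFV_top]
    exact lt_top_iff_ne_top.mpr (Ideal.IsMaximal.ne_top inferInstance)
  let c2 := (q.map FV hFV).snoc ⊤ hc2snoc
  have hconn : c1.last = c2.head := by
    show (p.map F2 hF2).last = ((q.map FV hFV).snoc ⊤ hc2snoc).head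
    rw [LTSeries.last_map, hp_last, hF2_top, RelSeries.head_snoc, LTSeries.head_map,
      hq_head, hFV_bot]
  let total : LTSeries (Ideal R) := RelSeries.smash c1 c2 hconn
  have hlen : total.length = (e - 1) + (dV + 1) := by
    show c1.length + c2.length = _
    have h1 : c1.length = e - 1 := by
      show p.length = e - 1
      rw [hp_len, hdW]
    have h2 : c2.length = dV + 1 := by
      show (q.map FV hFV).length + 1 = dV + 1
      show q.length + 1 = dV + 1
      rw [hq_len]
    rw [h1, h2]
  have hle := Order.LTSeries.length_le_krullDim total
  unfold moduleLength at hR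
  rw [hlen] at hle
  rw [show Order.krullDim (Ideal R) = Order.krullDim (Submodule R R) from rfl, hR] at hle
  have hdVe : dV ≤ e := by
    have := withBot_natCast_le.mp hle
    omega
  -- the linear map φ : m/m² → m²
  have hxmem : ∀ y : ↥m, ((LinearMap.mulLeft R x).comp m.subtype) y ∈ m ^ 2 := by
    intro y
    show x * (y : R) ∈ m ^ 2
    rw [← hx]
    exact Ideal.mem_span_singleton_mul.mpr ⟨y, y.2, rfl⟩
  let ψ : ↥m →ₗ[R] M2 :=
    LinearMap.codRestrict (m ^ 2) ((LinearMap.mulLeft R x).comp m.subtype) hxmem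
  have hψ_apply : ∀ y : ↥m, ((ψ y : R)) = x * y := fun y => rfl
  have hψT : T ≤ LinearMap.ker ψ := by
    refine Submodule.smul_le.mpr fun r hr y _ => ?_
    rw [LinearMap.mem_ker]
    apply Subtype.ext
    show x * ((r • y : ↥m) : R) = 0
    have hry : ((r • y : ↥m) : R) = r * (y : R) := rfl
    rw [hry]
    have hmem3 : x * (r * (y : R)) ∈ m ^ 3 := by
      rw [← mul_assoc, pow_succ, pow_two]
      exact Ideal.mul_mem_mul (Ideal.mul_mem_mul hxm hr) y.2
    rw [h3] at hmem3
    simpa using hmem3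
  let φ : V →ₗ[R] M2 := T.liftQ ψ hψT
  have hφ_mk : ∀ y : ↥m, φ (T.mkQ y) = ψ y := fun y => rfl
  let φK : V →ₗ[K] M2 :=
    { toFun := φ
      map_add' := φ.map_add
      map_smul' := by
        intro c v
        obtain ⟨c₀, rfl⟩ := hsur c
        simp only [RingHom.id_apply]
        rw [algebraMap_smul, algebraMap_smul, map_smul] }
  have hφsur : Function.Surjective φK := by
    intro z
    have hz : (z : R) ∈ Ideal.span {x} * m := by rw [hx]; exact z.2
    obtain ⟨y, hy, hxy⟩ := Ideal.mem_span_singleton_mul.mp hz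
    exact ⟨T.mkQ ⟨y, hy⟩, Subtype.ext hxy⟩
  -- the class of w
  set wb : V := T.mkQ ⟨w, hwm⟩ with hwb
  have hwb0 : wb ≠ 0 := by
    intro h0
    rw [hwb, Submodule.mkQ_apply, Submodule.Quotient.mk_eq_zero] at h0
    exact hwm2 (hTmap ▸ Submodule.mem_map_of_mem h0)
  have hwker : wb ∈ LinearMap.ker φK := by
    rw [LinearMap.mem_ker]
    show φ wb = 0
    rw [hwb, hφ_mk]
    apply Subtype.ext
    show x * w = 0
    rw [mul_comm]; exact hwx
  -- rank-nullity
  have hrn := LinearMap.finrank_range_add_finrank_ker φK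
  have hrange : LinearMap.range φK = ⊤ := LinearMap.range_eq_top.mpr hφsur
  rw [hrange, finrank_top] at hrn
  have hspan_le : Submodule.span K {wb} ≤ LinearMap.ker φK := by
    rw [Submodule.span_singleton_le_iff_mem]; exact hwker
  have hfr1 : finrank K (Submodule.span K {wb}) = 1 := finrank_span_singleton hwb0
  have hker1 : finrank K ↥(LinearMap.ker φK) ≤ finrank K ↥(Submodule.span K {wb}) := by
    rw [hfr1, hdW] at *
    omega
  have hkey : Submodule.span K {wb} = LinearMap.ker φK :=
    Submodule.eq_of_le_of_finrank_le hspan_le hker1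
  -- conclude
  intro a ha
  have hxa : x * a = 0 := by
    have := (LinearMap.mem_ker (f := LinearMap.mulLeft R x)).mp ha
    simpa using this
  by_cases hau : IsUnit a
  · exfalso
    obtain ⟨u, rfl⟩ := hau
    apply hx0
    have h1 := congrArg (· * ((u⁻¹ : Rˣ) : R)) hxa
    simpa [mul_assoc] using h1
  · have ham : a ∈ m := (mem_maximalIdeal a).mpr hau
    have haker : T.mkQ ⟨a, ham⟩ ∈ LinearMap.ker φK := by
      rw [LinearMap.mem_ker]
      show φ (T.mkQ ⟨a, ham⟩) = 0
      rw [hφ_mk]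
      apply Subtype.ext
      show x * a = 0
      exact hxa
    rw [← hkey] at haker
    obtain ⟨c, hc⟩ := Submodule.mem_span_singleton.mp haker
    obtain ⟨c₀, rfl⟩ := hsur c
    rw [algebraMap_smul, hwb, ← map_smul] at hc
    have hdiff : (c₀ • (⟨w, hwm⟩ : ↥m)) - ⟨a, ham⟩ ∈ T := by
      rw [← Submodule.Quotient.eq]
      exact hc
    have hmem : c₀ * w - a ∈ m ^ 2 := by
      have h5 := hTmap ▸ Submodule.mem_map_of_mem hdiff
      simpa using h5
    have h1 : c₀ * w ∈ Ideal.span {w} := Ideal.mem_span_singleton'.mpr ⟨c₀, rfl⟩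
    have h2 : c₀ * w - a ∈ Ideal.span {w} := hm2w hmem
    have h6 := sub_mem h1 h2
    simpa using h6

end Key

/-- let `(R, m, k)` be a commutative noetherian local ring with
Hilbert series `1 + eτ + (e-1)τ²` (encoded by: `m³ = 0`, `length R = 2e`,
`length m² = e - 1`), `e ≥ 2`.  If `wx = 0`, `wm = m²` and `xm = m²`, then `w`
and `x` form an exact pair of zero divisors. -/
theorem stmt6 (R : Type u) [CommRing R] [IsNoetherianRing R] [IsLocalRing R]
    (e : ℕ) (he : 2 ≤ e)
    (h3 : (IsLocalRing.maximalIdeal R) ^ 3 = ⊥)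
    (hR : moduleLength R R = ((2 * e : ℕ) : WithBot ℕ∞))
    (hm2 : moduleLength R (↥((IsLocalRing.maximalIdeal R) ^ 2)) = ((e - 1 : ℕ) : WithBot ℕ∞))
    (w x : R) (hwx : w * x = 0)
    (hw : Ideal.span {w} * IsLocalRing.maximalIdeal R = (IsLocalRing.maximalIdeal R) ^ 2)
    (hx : Ideal.span {x} * IsLocalRing.maximalIdeal R = (IsLocalRing.maximalIdeal R) ^ 2) :
    x ≠ 0 ∧ ¬ IsUnit x ∧ w ≠ 0 ∧ ¬ IsUnit w ∧
    annIdeal R x = Ideal.span {w} ∧ annIdeal R w = Ideal.span {x} := by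
  have m2ne : (IsLocalRing.maximalIdeal R) ^ 2 ≠ ⊥ := aux_m2_ne_bot R e he hm2
  have hxw : x * w = 0 := by rw [mul_comm]; exact hwx
  refine ⟨aux_ne_zero R m2ne hx, aux_not_unit R m2ne h3 hx,
    aux_ne_zero R m2ne hw, aux_not_unit R m2ne h3 hw, ?_, ?_⟩
  · refine le_antisymm (aux_key R e he h3 hR hm2 w x hwx hw hx) ?_
    rw [Ideal.span_le]
    intro v hv
    rw [Set.mem_singleton_iff] at hv
    rw [hv]
    show w ∈ LinearMap.ker (LinearMap.mulLeft R x)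
    rw [LinearMap.mem_ker]
    simpa using hxw
  · refine le_antisymm (aux_key R e he h3 hR hm2 x w hxw hx hw) ?_
    rw [Ideal.span_le]
    intro v hv
    rw [Set.mem_singleton_iff] at hv
    rw [hv]
    show x ∈ LinearMap.ker (LinearMap.mulLeft R w)
    rw [LinearMap.mem_ker]
    simpa using hwx
end

section
/- Let (R, m) be a commutative noetherian local ring with m³ = 0 and embedding dimension e ≥ 2, and suppose w and x form an exact pair of zero divisors in R. Then x is a minimal generator of m (x ∈ m \ m²), xm = m², the length of the ideal (x) equals e, and dim_k(m²) = e − 1. -/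
section KrullAux

variable {α : Type*} [Preorder α]

lemma krullDim_eq_coe_of_chain (n : ℕ) (p : LTSeries α) (hp : p.length = n)
    (h : ∀ q : LTSeries α, q.length ≤ n) : Order.krullDim α = (n : WithBot ℕ∞) := by
  have hne : Nonempty α := ⟨p.head⟩
  rw [Order.krullDim_eq_iSup_length]
  have : (⨆ q : LTSeries α, (q.length : ℕ∞)) = (n : ℕ∞) := by
    apply le_antisymm
    · exact iSup_le fun q => by exact_mod_cast h q
    · exact le_iSup_of_le p (by exact_mod_cast hp.ge)
  rw [this]
  norm_cast

lemma length_le_of_krullDim_eq_coe {n : ℕ} (h : Order.krullDim α = (n : WithBot ℕ∞))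
    (q : LTSeries α) : q.length ≤ n := by
  have := Order.LTSeries.length_le_krullDim q
  rw [h] at this
  exact_mod_cast this

lemma le_height_top_of_krullDim_eq_coe [OrderTop α] {n : ℕ}
    (h : Order.krullDim α = (n : WithBot ℕ∞)) : (n : ℕ∞) ≤ Order.height (⊤ : α) := by
  have hne : Nonempty α := ⟨⊤⟩
  rw [Order.krullDim_eq_iSup_height_of_nonempty] at h
  have h' : (⨆ a : α, Order.height a) = (n : ℕ∞) := by exact_mod_cast h
  rw [← h']
  exact iSup_le fun a => Order.height_mono le_top

lemma le_coheight_bot_of_krullDim_eq_coe [OrderBot α] {n : ℕ}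
    (h : Order.krullDim α = (n : WithBot ℕ∞)) : (n : ℕ∞) ≤ Order.coheight (⊥ : α) := by
  have hne : Nonempty α := ⟨⊥⟩
  rw [Order.krullDim_eq_iSup_coheight_of_nonempty] at h
  have h' : (⨆ a : α, Order.coheight a) = (n : ℕ∞) := by exact_mod_cast h
  rw [← h']
  exact iSup_le fun a => Order.coheight_anti bot_le

lemma krullDim_eq_one_of_isSimpleOrder {β : Type*} [PartialOrder β] [BoundedOrder β]
    [IsSimpleOrder β] : Order.krullDim β = (1 : ℕ) := by
  refine krullDim_eq_coe_of_chain 1 ((RelSeries.singleton _ (⊥ : β)).snoc ⊤ ?_) ?_ ?_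
  · simpa [RelSeries.last_singleton] using (bot_lt_top : (⊥:β) < ⊤)
  · rfl
  · intro q
    by_contra hq
    push_neg at hq
    have h0 : 0 < q.length := by omega
    have h1 : 1 < q.length := by omega
    have s0 := q.step ⟨0, h0⟩
    have s1 := q.step ⟨1, h1⟩
    have hmid : (⟨0, h0⟩ : Fin q.length).succ = (⟨1, h1⟩ : Fin q.length).castSucc := by
      ext; simp
    rw [hmid] at s0
    rcases eq_bot_or_eq_top (q (⟨1, h1⟩ : Fin q.length).castSucc) with h | h
    · rw [h] at s0; exact not_lt_bot s0
    · rw [h] at s1; exact not_top_lt s1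

end KrullAux

section VS

open Module

lemma krullDim_submodule_eq_finrank (k V : Type*) [DivisionRing k] [AddCommGroup V]
    [Module k V] [FiniteDimensional k V] :
    Order.krullDim (Submodule k V) = ((Module.finrank k V : ℕ) : WithBot ℕ∞) := by
  set n := Module.finrank k V with hn
  let b := Module.finBasis k V
  let P : Fin (n + 1) → Submodule k V :=
    fun i => Submodule.span k (b '' {j : Fin n | (j : ℕ) < (i : ℕ)})
  have hstep : ∀ i : Fin n, P i.castSucc < P i.succ := by
    intro i
    rw [SetLike.lt_iff_le_and_exists]
    constructor
    · apply Submodule.span_mono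
      apply Set.image_mono
      intro j hj
      simp only [Set.mem_setOf_eq, Fin.coe_castSucc, Fin.val_succ] at hj ⊢
      exact Nat.lt_succ_of_lt hj
    · refine ⟨b i, Submodule.subset_span ⟨i, by show (i:ℕ) < (i.succ : ℕ); simp, rfl⟩, ?_⟩
      exact b.linearIndependent.notMem_span_image (by show ¬ ((i:ℕ) < (i.castSucc : ℕ)); simp)
  refine krullDim_eq_coe_of_chain n ⟨n, P, hstep⟩ rfl ?_
  intro q
  have hsm : StrictMono (fun i : Fin (q.length + 1) => Module.finrank k (q i)) := by
    intro i j hij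
    exact Submodule.finrank_lt_finrank_of_lt (q.strictMono hij)
  have key : ∀ i : Fin (q.length + 1), (i : ℕ) ≤ Module.finrank k (q i) := by
    intro i
    induction i using Fin.induction with
    | zero => simp
    | succ i ih =>
      have := hsm (Fin.castSucc_lt_succ (i := i))
      dsimp only at this
      simp only [Fin.coe_castSucc] at ih
      simp only [Fin.val_succ]
      omega
  have h1 := key (Fin.last q.length)
  have h2 : Module.finrank k (q (Fin.last q.length)) ≤ n := Submodule.finrank_le _
  simpa using h1.trans h2

end VS

section ModLen

variable {R : Type u} [CommRing R] {M : Type v} [AddCommGroup M] [Module R M]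

lemma moduleLength_congr {M' : Type*} [AddCommGroup M'] [Module R M'] (e : M ≃ₗ[R] M') :
    moduleLength R M = moduleLength R M' :=
  Order.krullDim_eq_of_orderIso (Submodule.orderIsoMapComap e)

lemma moduleLength_eq_one_of_isSimple (h : IsSimpleModule R M) : moduleLength R M = (1 : ℕ) :=
  krullDim_eq_one_of_isSimpleOrder

/-- Change of scalars order iso for submodules along a surjective algebra map. -/
def subOrderIso (k : Type*) [CommRing k] [Algebra R k]
    (hsurj : Function.Surjective (algebraMap R k))
    (M : Type v) [AddCommGroup M] [Module R M] [Module k M] [IsScalarTower R k M] :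
    Submodule k M ≃o Submodule R M where
  toFun p := p.restrictScalars R
  invFun p :=
    { carrier := p
      add_mem' := fun ha hb => p.add_mem ha hb
      zero_mem' := p.zero_mem
      smul_mem' := fun c x hx => by
        obtain ⟨r, rfl⟩ := hsurj c
        rw [algebraMap_smul]
        exact p.smul_mem r hx }
  left_inv p := by ext y; rfl
  right_inv p := by ext y; rfl
  map_rel_iff' := by intro p q; simp [SetLike.le_def]

lemma moduleLength_eq_finrank (k : Type*) [Field k] [Algebra R k]
    (hsurj : Function.Surjective (algebraMap R k))
    (M : Type v) [AddCommGroup M] [Module R M] [Module k M] [IsScalarTower R k M]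
    [Module.Finite k M] :
    moduleLength R M = ((Module.finrank k M : ℕ) : WithBot ℕ∞) := by
  rw [moduleLength, ← Order.krullDim_eq_of_orderIso (subOrderIso k hsurj M)]
  exact krullDim_submodule_eq_finrank k M

end ModLen

section Additivity

variable {R : Type u} [CommRing R] {M : Type v} [AddCommGroup M] [Module R M]

lemma step_or (N : Submodule R M) {P Q : Submodule R M} (h : P < Q) :
    Submodule.comap N.subtype P < Submodule.comap N.subtype Q ∨
      Submodule.map N.mkQ P < Submodule.map N.mkQ Q := by
  by_contra hc
  push_neg at hc
  have h1 : Submodule.comap N.subtype P = Submodule.comap N.subtype Q :=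
    ((Submodule.comap_mono h.le).lt_or_eq).resolve_left hc.1
  have h2 : Submodule.map N.mkQ P = Submodule.map N.mkQ Q :=
    ((Submodule.map_mono h.le).lt_or_eq).resolve_left hc.2
  have hinf : N ⊓ P = N ⊓ Q := by
    rw [← Submodule.map_comap_subtype, ← Submodule.map_comap_subtype, h1]
  have hsup : N ⊔ P = N ⊔ Q := by
    rw [← Submodule.comap_map_mkQ, ← Submodule.comap_map_mkQ, h2]
  have : P = Q := by
    apply eq_of_le_of_inf_le_of_sup_le h.le
    · rw [inf_comm Q N, ← hinf, inf_comm]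
    · rw [sup_comm Q N, ← hsup, sup_comm]
  exact h.ne this

lemma exists_pair (N : Submodule R M) (p : LTSeries (Submodule R M)) :
    ∃ (q : LTSeries (Submodule R N)) (r : LTSeries (Submodule R (M ⧸ N))),
      q.last = Submodule.comap N.subtype p.last ∧ r.last = Submodule.map N.mkQ p.last ∧
      p.length ≤ q.length + r.length := by
  suffices H : ∀ (n : ℕ) (p : LTSeries (Submodule R M)), p.length = n →
      ∃ (q : LTSeries (Submodule R N)) (r : LTSeries (Submodule R (M ⧸ N))),
      q.last = Submodule.comap N.subtype p.last ∧ r.last = Submodule.map N.mkQ p.last ∧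
      p.length ≤ q.length + r.length by
    exact H p.length p rfl
  intro n
  induction n with
  | zero =>
      intro p hL
      exact ⟨RelSeries.singleton _ _, RelSeries.singleton _ _,
        RelSeries.last_singleton _, RelSeries.last_singleton _, by omega⟩
  | succ n ih =>
      intro p hL
      have h0 : p.length ≠ 0 := by omega
      obtain ⟨q, r, hq, hr, hlen⟩ := ih p.eraseLast (by simp [RelSeries.eraseLast_length]; omega)
      have hstep : p.eraseLast.last < p.last := p.eraseLast_last_rel_last h0
      have hL' : p.eraseLast.length = n := by simp [RelSeries.eraseLast_length]; omega
      rcases (Submodule.comap_mono (f := N.subtype) hstep.le).lt_or_eq with hf | hf <;>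
        rcases (Submodule.map_mono (f := N.mkQ) hstep.le).lt_or_eq with hg | hg
      · exact ⟨q.snoc _ (hq ▸ hf), r.snoc _ (hr ▸ hg), RelSeries.last_snoc _ _ _,
          RelSeries.last_snoc _ _ _, by simp [RelSeries.snoc_length]; omega⟩
      · exact ⟨q.snoc _ (hq ▸ hf), r, RelSeries.last_snoc _ _ _, hr.trans hg,
          by simp [RelSeries.snoc_length]; omega⟩
      · exact ⟨q, r.snoc _ (hr ▸ hg), hq.trans hf, RelSeries.last_snoc _ _ _,
          by simp [RelSeries.snoc_length]; omega⟩
      · exfalso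
        rcases step_or N hstep with h | h
        · rw [hf] at h; exact lt_irrefl _ h
        · rw [hg] at h; exact lt_irrefl _ h

lemma moduleLength_additive (N : Submodule R M) {a b : ℕ}
    (hN : moduleLength R N = (a : ℕ)) (hQ : moduleLength R (M ⧸ N) = (b : ℕ)) :
    moduleLength R M = ((a + b : ℕ) : WithBot ℕ∞) := by
  obtain ⟨q, hqlast, hqlen⟩ := Order.exists_series_of_le_height (⊤ : Submodule R N)
    (le_height_top_of_krullDim_eq_coe hN)
  obtain ⟨r, hrhead, hrlen⟩ := Order.exists_series_of_le_coheight (⊥ : Submodule R (M ⧸ N))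
    (le_coheight_bot_of_krullDim_eq_coe hQ)
  have hFs : StrictMono (Submodule.map N.subtype) :=
    Submodule.map_strictMono_of_injective N.injective_subtype
  have hGs : StrictMono (Submodule.comap N.mkQ) :=
    Submodule.comap_strictMono_of_surjective N.mkQ_surjective
  have hconn : (q.map _ hFs).last = (r.map _ hGs).head := by
    rw [LTSeries.last_map, LTSeries.head_map, hqlast, hrhead]
    simp [Submodule.map_top, Submodule.range_subtype, Submodule.ker_mkQ]
  refine krullDim_eq_coe_of_chain (a + b) (RelSeries.smash _ _ hconn) ?_ ?_
  · simp [RelSeries.smash_length, hqlen, hrlen]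
  · intro p
    obtain ⟨q', r', _, _, hlen⟩ := exists_pair N p
    have hq' : q'.length ≤ a := length_le_of_krullDim_eq_coe hN q'
    have hr' : r'.length ≤ b := length_le_of_krullDim_eq_coe hQ r'
    omega

end Additivity

section Torsion

open IsLocalRing

variable {R : Type u} [CommRing R] [IsLocalRing R]

lemma exists_nat_moduleLength (M : Type v) [AddCommGroup M] [Module R M] [Module.Finite R M]
    (htor : Module.IsTorsionBySet R M ((IsLocalRing.maximalIdeal R : Ideal R) : Set R)) :
    ∃ c : ℕ, moduleLength R M = ((c : ℕ) : WithBot ℕ∞) := by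
  letI : Module (ResidueField R) M := htor.module
  haveI : IsScalarTower R (ResidueField R) M := htor.isScalarTower
  haveI : Module.Finite (ResidueField R) M := Module.Finite.of_restrictScalars_finite R _ _
  exact ⟨_, moduleLength_eq_finrank (ResidueField R) Ideal.Quotient.mk_surjective M⟩

end Torsion

section MainAux

open IsLocalRing

variable {R : Type u} [CommRing R] [IsLocalRing R]

lemma mem_annIdeal_iff {a r : R} : r ∈ annIdeal R a ↔ a * r = 0 := by
  simp [annIdeal, LinearMap.mem_ker]

lemma sq_le_span_of_ann (h3 : (maximalIdeal R) ^ 3 = ⊥) {w x : R} (hwm : w ∈ maximalIdeal R)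
    (h2 : annIdeal R w = Ideal.span {x}) : (maximalIdeal R) ^ 2 ≤ Ideal.span {x} := by
  intro y hy
  rw [← h2, mem_annIdeal_iff]
  have hmem : w * y ∈ (maximalIdeal R) ^ 3 := by
    rw [pow_succ']
    exact Ideal.mul_mem_mul hwm hy
  rw [h3] at hmem
  simpa using hmem

lemma not_mem_sq [IsNoetherianRing R] {e : ℕ} (he : 2 ≤ e)
    (hdim : Module.finrank (ResidueField R) (CotangentSpace R) = e)
    (h3 : (maximalIdeal R) ^ 3 = ⊥) {w x : R} (hwm : w ∈ maximalIdeal R)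
    (h1 : annIdeal R x = Ideal.span {w}) (hx2 : x ∈ (maximalIdeal R) ^ 2) : False := by
  have hle : maximalIdeal R ≤ Ideal.span {w} := by
    rw [← h1]
    intro y hy
    rw [mem_annIdeal_iff]
    have hmem : x * y ∈ (maximalIdeal R) ^ 3 := by
      rw [pow_succ]
      exact Ideal.mul_mem_mul hx2 hy
    rw [h3] at hmem
    simpa using hmem
  have heq : maximalIdeal R = Ideal.span {w} :=
    le_antisymm hle (by rwa [Ideal.span_le, Set.singleton_subset_iff])
  have hfr : Module.finrank (ResidueField R) (CotangentSpace R) ≤ 1 := by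
    rw [Module.finrank_le_one_iff_top_isPrincipal]
    refine ⟨⟨(maximalIdeal R).toCotangent ⟨w, hwm⟩, ?_⟩⟩
    apply le_antisymm _ le_top
    intro z _
    obtain ⟨y, rfl⟩ := Ideal.toCotangent_surjective _ z
    obtain ⟨a, ha⟩ := Submodule.mem_span_singleton.mp (show (y:R) ∈ Ideal.span {w} by rw [← heq]; exact y.2)
    have hy : y = a • (⟨w, hwm⟩ : ↥(maximalIdeal R)) := Subtype.ext (by simpa using ha.symm)
    rw [hy, map_smul, ← algebraMap_smul (ResidueField R) a]
    exact Submodule.smul_mem _ _ (Submodule.mem_span_singleton_self _)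
  omega

lemma span_mul_eq_sq {x : R} (hx2 : x ∉ (maximalIdeal R) ^ 2)
    (hm2x : (maximalIdeal R) ^ 2 ≤ Ideal.span {x}) :
    Ideal.span {x} ≤ maximalIdeal R →
    Ideal.span {x} * maximalIdeal R = (maximalIdeal R) ^ 2 := by
  intro hXle
  apply le_antisymm
  · calc Ideal.span {x} * maximalIdeal R ≤ maximalIdeal R * maximalIdeal R :=
        Ideal.mul_mono hXle le_rfl
      _ = (maximalIdeal R) ^ 2 := (pow_two _).symm
  · intro y hy
    obtain ⟨a, ha⟩ := Ideal.mem_span_singleton'.mp (hm2x hy)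
    have ham : a ∈ maximalIdeal R := by
      by_contra hau
      obtain ⟨u, hu⟩ := IsLocalRing.notMem_maximalIdeal.mp hau
      have : x ∈ (maximalIdeal R) ^ 2 := by
        have hx : x = ↑u⁻¹ * y := by
          rw [← ha, ← hu, ← mul_assoc, Units.inv_mul, one_mul]
        rw [hx]
        exact Ideal.mul_mem_left _ _ hy
      exact hx2 this
    rw [← ha, mul_comm a x]
    exact Ideal.mul_mem_mul (Ideal.mem_span_singleton_self x) ham

lemma isSimpleModule_span_quot {x : R} (hx2 : x ∉ (maximalIdeal R) ^ 2)
    (hXm : Ideal.span {x} * maximalIdeal R = (maximalIdeal R) ^ 2) :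
    IsSimpleModule R ((↥(Ideal.span {x})) ⧸
      (Submodule.comap (Ideal.span {x}).subtype ((maximalIdeal R) ^ 2 : Ideal R))) := by
  set X : Ideal R := Ideal.span {x} with hX
  set N : Submodule R ↥X :=
    Submodule.comap X.subtype ((maximalIdeal R) ^ 2 : Ideal R) with hN
  set φ : R →ₗ[R] (↥X ⧸ N) :=
    (N.mkQ).comp (LinearMap.toSpanSingleton R ↥X ⟨x, Ideal.mem_span_singleton_self x⟩) with hφ
  have hsurj : Function.Surjective φ := by
    intro z
    obtain ⟨y, rfl⟩ := Submodule.mkQ_surjective _ z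
    obtain ⟨a, ha⟩ := Submodule.mem_span_singleton.mp y.2
    refine ⟨a, ?_⟩
    simp only [hφ, LinearMap.comp_apply, LinearMap.toSpanSingleton_apply, Submodule.mkQ_apply]
    congr 1
    exact Subtype.ext (by simpa using ha)
  have hker : LinearMap.ker φ = (maximalIdeal R : Ideal R) := by
    ext r
    simp only [hφ, LinearMap.mem_ker, LinearMap.comp_apply, LinearMap.toSpanSingleton_apply,
      Submodule.mkQ_apply, Submodule.Quotient.mk_eq_zero, hN, Submodule.mem_comap,
      Submodule.coe_subtype, SetLike.val_smul, smul_eq_mul]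
    constructor
    · intro h
      by_contra hr
      obtain ⟨u, hu⟩ := IsLocalRing.notMem_maximalIdeal.mp hr
      have : x ∈ (maximalIdeal R) ^ 2 := by
        have hx : x = ↑u⁻¹ * (r * x) := by
          rw [← hu, ← mul_assoc, Units.inv_mul, one_mul]
        rw [hx]
        exact Ideal.mul_mem_left _ _ h
      exact hx2 this
    · intro hr
      rw [← hXm, mul_comm]
      exact Ideal.mul_mem_mul hr (Ideal.mem_span_singleton_self x)
  rw [isSimpleModule_iff_quot_maximal]
  refine ⟨maximalIdeal R, inferInstance, ⟨?_⟩⟩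
  exact (LinearMap.quotKerEquivOfSurjective φ hsurj).symm.trans
    (Submodule.quotEquivOfEq _ _ hker)

end MainAux

open IsLocalRing

/-- let `(R, m)` be a commutative noetherian local ring with
`m³ = 0` and embedding dimension `e ≥ 2`, and suppose `w, x` form an exact pair
of zero divisors.  Then `x ∈ m \ m²`, `xm = m²`, the ideal `(x)` has length
`e`, and `dim_k m² = e - 1` (expressed as the length of `m²`). -/
theorem stmt7 (R : Type u) [CommRing R] [IsNoetherianRing R] [IsLocalRing R]
    (e : ℕ) (he : 2 ≤ e)
    (hdim : Module.finrank (IsLocalRing.ResidueField R) (IsLocalRing.CotangentSpace R) = e)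
    (h3 : (IsLocalRing.maximalIdeal R) ^ 3 = ⊥)
    (w x : R) (hx0 : x ≠ 0) (hxu : ¬ IsUnit x) (hw0 : w ≠ 0) (hwu : ¬ IsUnit w)
    (h1 : annIdeal R x = Ideal.span {w}) (h2 : annIdeal R w = Ideal.span {x}) :
    x ∈ IsLocalRing.maximalIdeal R ∧ x ∉ (IsLocalRing.maximalIdeal R) ^ 2 ∧
    Ideal.span {x} * IsLocalRing.maximalIdeal R = (IsLocalRing.maximalIdeal R) ^ 2 ∧
    moduleLength R (↥(Ideal.span {x})) = ((e : ℕ) : WithBot ℕ∞) ∧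
    moduleLength R (↥((IsLocalRing.maximalIdeal R) ^ 2)) = ((e - 1 : ℕ) : WithBot ℕ∞) := by
  have hxm : x ∈ maximalIdeal R := (mem_maximalIdeal x).mpr hxu
  have hwm : w ∈ maximalIdeal R := (mem_maximalIdeal w).mpr hwu
  have hx2 : x ∉ (maximalIdeal R) ^ 2 := fun h => not_mem_sq he hdim h3 hwm h1 h
  have hw2 : w ∉ (maximalIdeal R) ^ 2 := fun h => not_mem_sq he hdim h3 hxm h2 h
  have hm2x : (maximalIdeal R) ^ 2 ≤ Ideal.span {x} := sq_le_span_of_ann h3 hwm h2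
  have hm2w : (maximalIdeal R) ^ 2 ≤ Ideal.span {w} := sq_le_span_of_ann h3 hxm h1
  have hXle : Ideal.span {x} ≤ maximalIdeal R := by
    rwa [Ideal.span_le, Set.singleton_subset_iff]
  have hWle : Ideal.span {w} ≤ maximalIdeal R := by
    rwa [Ideal.span_le, Set.singleton_subset_iff]
  have hXm := span_mul_eq_sq hx2 hm2x hXle
  have hWm := span_mul_eq_sq hw2 hm2w hWle
  haveI : Module.Finite R ↥((maximalIdeal R) ^ 2 : Ideal R) :=
    Module.Finite.iff_fg.mpr (IsNoetherian.noetherian _)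
  have htor : Module.IsTorsionBySet R ↥((maximalIdeal R) ^ 2 : Ideal R)
      ((maximalIdeal R : Ideal R) : Set R) := by
    intro z a
    apply Subtype.ext
    have hmem : (a : R) * (z : R) ∈ (maximalIdeal R) ^ 3 := by
      rw [pow_succ']
      exact Ideal.mul_mem_mul a.2 z.2
    rw [h3] at hmem
    simpa using hmem
  obtain ⟨c, hc⟩ := exists_nat_moduleLength (R := R) ↥((maximalIdeal R) ^ 2 : Ideal R) htor
  have hcot : moduleLength R (CotangentSpace R) = ((e : ℕ) : WithBot ℕ∞) := by
    rw [moduleLength_eq_finrank (ResidueField R) Ideal.Quotient.mk_surjective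
      (CotangentSpace R), hdim]
  have hmN : moduleLength R ↥(LinearMap.ker (maximalIdeal R).toCotangent)
      = ((c : ℕ) : WithBot ℕ∞) := by
    rw [moduleLength_congr ((Submodule.equivMapOfInjective (maximalIdeal R).subtype
      (Submodule.injective_subtype _) _).trans
      (LinearEquiv.ofEq _ _ (Ideal.map_toCotangent_ker _)))]
    exact hc
  have hmQ : moduleLength R (↥(maximalIdeal R) ⧸ LinearMap.ker (maximalIdeal R).toCotangent)
      = ((e : ℕ) : WithBot ℕ∞) := by
    rw [moduleLength_congr (LinearMap.quotKerEquivOfSurjective _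
      (Ideal.toCotangent_surjective _))]
    exact hcot
  have hlenm : moduleLength R ↥(maximalIdeal R) = ((c + e : ℕ) : WithBot ℕ∞) :=
    moduleLength_additive _ hmN hmQ
  haveI hsimRm : IsSimpleModule R (R ⧸ (maximalIdeal R : Ideal R)) := by
    rw [isSimpleModule_iff_quot_maximal]
    exact ⟨maximalIdeal R, inferInstance, ⟨LinearEquiv.refl _ _⟩⟩
  have hRmQ : moduleLength R (R ⧸ (maximalIdeal R : Ideal R)) = ((1 : ℕ) : WithBot ℕ∞) :=
    moduleLength_eq_one_of_isSimple hsimRm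
  have hlenR : moduleLength R R = ((c + e + 1 : ℕ) : WithBot ℕ∞) :=
    moduleLength_additive (maximalIdeal R : Ideal R) hlenm hRmQ
  have hX : moduleLength R ↥(Ideal.span {x}) = ((c + 1 : ℕ) : WithBot ℕ∞) := by
    refine moduleLength_additive
      (Submodule.comap (Ideal.span {x}).subtype ((maximalIdeal R) ^ 2 : Ideal R)) ?_ ?_
    · rw [moduleLength_congr (Submodule.comapSubtypeEquivOfLe hm2x)]
      exact hc
    · exact moduleLength_eq_one_of_isSimple (isSimpleModule_span_quot hx2 hXm)
  have hW : moduleLength R ↥(Ideal.span {w}) = ((c + 1 : ℕ) : WithBot ℕ∞) := by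
    refine moduleLength_additive
      (Submodule.comap (Ideal.span {w}).subtype ((maximalIdeal R) ^ 2 : Ideal R)) ?_ ?_
    · rw [moduleLength_congr (Submodule.comapSubtypeEquivOfLe hm2w)]
      exact hc
    · exact moduleLength_eq_one_of_isSimple (isSimpleModule_span_quot hw2 hWm)
  have hkerspan : LinearMap.ker (LinearMap.toSpanSingleton R R x)
      = (Ideal.span {w} : Ideal R) := by
    rw [← h1]
    ext r
    simp [annIdeal, LinearMap.mem_ker, mul_comm]
  have hRw : moduleLength R (R ⧸ (Ideal.span {w} : Ideal R)) = ((c + 1 : ℕ) : WithBot ℕ∞) := by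
    rw [moduleLength_congr ((Submodule.quotEquivOfEq _ _ hkerspan.symm).trans
      ((LinearMap.quotKerEquivRange (LinearMap.toSpanSingleton R R x)).trans
      (LinearEquiv.ofEq _ _ (LinearMap.span_singleton_eq_range R R x).symm)))]
    exact hX
  have hlenR2 : moduleLength R R = ((c + 1 + (c + 1) : ℕ) : WithBot ℕ∞) :=
    moduleLength_additive (Ideal.span {w} : Ideal R) hW hRw
  have harith : c + e + 1 = c + 1 + (c + 1) := by
    have h := hlenR.symm.trans hlenR2
    exact_mod_cast h
  refine ⟨hxm, hx2, hXm, ?_, ?_⟩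
  · rw [hX]
    norm_cast
    omega
  · rw [hc]
    norm_cast
    omega
end

section
/- Let (R, m, k) be a commutative noetherian local ring of embedding dimension 2 with m³ = 0. Then the following are equivalent: (i) there exists an exact zero divisor in R; (ii) every element of m \ m² is an exact zero divisor in R; (iii) R is Gorenstein. -/
/-- `x` is an exact zero divisor: `x ≠ 0`, `x` is not a unit, and there is `w`
with `ann(x) = (w)` and `ann(w) = (x)`. -/
def IsExactZeroDivisor (R : Type u) [CommRing R] (x : R) : Prop :=
  x ≠ 0 ∧ ¬ IsUnit x ∧
    ∃ w, annIdeal R x = Ideal.span {w} ∧ annIdeal R w = Ideal.span {x}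

/-! ### Auxiliary order-theoretic lemmas -/

section OrderAux

open Order

lemma stmt8_krullDim_eq_one_of_simpleOrder (α : Type*) [PartialOrder α] [BoundedOrder α]
    [IsSimpleOrder α] : Order.krullDim α = 1 := by
  apply le_antisymm
  · apply iSup_le
    intro p
    suffices h : p.length ≤ 1 by exact_mod_cast Nat.cast_le.mpr h
    by_contra hlen
    push_neg at hlen
    have h01 : p.toFun ⟨0, by omega⟩ < p.toFun ⟨1, by omega⟩ :=
      p.strictMono (by rw [Fin.mk_lt_mk]; omega)
    have h12 : p.toFun ⟨1, by omega⟩ < p.toFun ⟨2, by omega⟩ :=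
      p.strictMono (by rw [Fin.mk_lt_mk]; omega)
    rcases IsSimpleOrder.eq_bot_or_eq_top (p.toFun ⟨1, by omega⟩) with h | h
    · rw [h] at h01; exact not_lt_bot h01
    · rw [h] at h12; exact absurd h12 (by simp)
  · have hbt : (⊥ : α) < ⊤ := bot_lt_top
    let q : LTSeries α := (RelSeries.singleton _ (⊥ : α)).snoc ⊤ (by
      rw [RelSeries.last_singleton]; exact hbt)
    have : (q.length : WithBot ℕ∞) ≤ krullDim α := LTSeries.length_le_krullDim q
    have hq : q.length = 1 := rfl
    rw [hq] at this
    exact_mod_cast this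

lemma stmt8_isSimpleOrder_of_krullDim_eq_one {α : Type*} [PartialOrder α] [BoundedOrder α]
    (h : Order.krullDim α = 1) : IsSimpleOrder α := by
  have hnt : (⊥ : α) ≠ ⊤ := by
    intro hbt
    have : Subsingleton α := ⟨fun a b => le_antisymm
      (le_trans le_top (hbt ▸ le_refl _) |>.trans bot_le)
      (le_trans le_top (hbt ▸ le_refl _) |>.trans bot_le)⟩
    have : Unique α := uniqueOfSubsingleton ⊥
    rw [krullDim_eq_zero_of_unique] at h
    exact absurd h (by decide)
  have : Nontrivial α := ⟨⟨⊥, ⊤, hnt⟩⟩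
  refine ⟨fun a => ?_⟩
  by_contra hcon
  push_neg at hcon
  obtain ⟨ha1, ha2⟩ := hcon
  have h1 : (⊥ : α) < a := bot_lt_iff_ne_bot.mpr ha1
  have h2 : a < ⊤ := lt_top_iff_ne_top.mpr ha2
  let q : LTSeries α := ((RelSeries.singleton _ (⊥ : α)).snoc a (by
    rw [RelSeries.last_singleton]; exact h1)).snoc ⊤ (by
    rw [RelSeries.last_snoc]; exact h2)
  have hle : (q.length : WithBot ℕ∞) ≤ krullDim α := LTSeries.length_le_krullDim q
  have hq : q.length = 2 := rfl
  rw [hq, h] at hle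
  exact absurd hle (by decide)

lemma stmt8_moduleLength_eq_one_iff {R : Type u} [CommRing R] {M : Type v}
    [AddCommGroup M] [Module R M] :
    moduleLength R M = (1 : ℕ∞) ↔ IsSimpleModule R M := by
  have hcast : ((1 : ℕ∞) : WithBot ℕ∞) = (1 : WithBot ℕ∞) := rfl
  constructor
  · intro h
    exact { toIsSimpleOrder := stmt8_isSimpleOrder_of_krullDim_eq_one (by rw [← hcast]; exact h) }
  · intro h
    show Order.krullDim (Submodule R M) = _
    rw [stmt8_krullDim_eq_one_of_simpleOrder (Submodule R M)]
    exact hcast.symm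

lemma stmt8_span_pair_eq_top {K V : Type*} [Field K] [AddCommGroup V] [Module K V]
    [FiniteDimensional K V] (h2 : Module.finrank K V = 2) {w u : V} (hw : w ≠ 0)
    (hu : u ∉ Submodule.span K {w}) : Submodule.span K {w, u} = ⊤ := by
  have hlt : Submodule.span K {w} < Submodule.span K {w, u} := by
    refine lt_of_le_of_ne (Submodule.span_mono (by simp)) fun he => hu ?_
    rw [he]; exact Submodule.subset_span (by simp)
  have h1 : Module.finrank K (Submodule.span K {w}) = 1 := finrank_span_singleton hw
  have hlt2 := Submodule.finrank_lt_finrank_of_lt hlt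
  have hle := Submodule.finrank_le (Submodule.span K {w, u})
  exact Submodule.eq_top_of_finrank_eq (by omega)

end OrderAux

/-! ### Auxiliary lemmas about the cotangent space of a local ring -/

section CotangentAux

open IsLocalRing Submodule Module

set_option linter.unusedSectionVars false

universe u

variable {R : Type u} [CommRing R] [IsNoetherianRing R] [IsLocalRing R]

local notation "mI" => IsLocalRing.maximalIdeal R
local notation "KK" => IsLocalRing.ResidueField R

/-- image in the cotangent space -/
noncomputable def stmt8ctg {a : R} (ha : a ∈ mI) : CotangentSpace R :=
  (maximalIdeal R).toCotangent ⟨a, ha⟩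

lemma stmt8ctg_eq_zero_iff {a : R} (ha : a ∈ mI) : stmt8ctg ha = 0 ↔ a ∈ mI ^ 2 :=
  Ideal.toCotangent_eq_zero _ _

lemma stmt8ctg_eq_iff {a b : R} (ha : a ∈ mI) (hb : b ∈ mI) :
    stmt8ctg ha = stmt8ctg hb ↔ a - b ∈ mI ^ 2 := Ideal.toCotangent_eq _

lemma stmt8_residue_smul_ctg (c : R) {a : R} (ha : a ∈ mI) :
    (residue R c) • stmt8ctg ha = stmt8ctg (Ideal.mul_mem_left _ c ha) := by
  rw [← ResidueField.algebraMap_eq, algebraMap_smul]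
  show c • (maximalIdeal R).toCotangent ⟨a, ha⟩ = _
  rw [← map_smul]
  rfl

lemma stmt8ctg_mem_span_iff {w a : R} (hw : w ∈ mI) (ha : a ∈ mI) :
    stmt8ctg ha ∈ span KK {stmt8ctg hw} ↔ ∃ c : R, a - c * w ∈ mI ^ 2 := by
  rw [Submodule.mem_span_singleton]
  constructor
  · rintro ⟨c, hc⟩
    obtain ⟨c₀, rfl⟩ := residue_surjective (R := R) c
    rw [stmt8_residue_smul_ctg] at hc
    refine ⟨c₀, ?_⟩
    have h1 := (stmt8ctg_eq_iff (Ideal.mul_mem_left _ c₀ hw) ha).mp hc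
    have h2 := neg_mem h1
    simpa using h2
  · rintro ⟨c, hc⟩
    refine ⟨residue R c, ?_⟩
    rw [stmt8_residue_smul_ctg, stmt8ctg_eq_iff]
    have := neg_mem hc
    simpa using this

lemma stmt8ctg_mem_span_pair {w t v : R} (hw : w ∈ mI) (ht : t ∈ mI) (hv : v ∈ mI)
    (h : stmt8ctg hv ∈ span KK {stmt8ctg hw, stmt8ctg ht}) :
    ∃ c d : R, v - (c * w + d * t) ∈ mI ^ 2 := by
  rw [Submodule.mem_span_pair] at h
  obtain ⟨c, d, hcd⟩ := h
  obtain ⟨c₀, rfl⟩ := residue_surjective (R := R) c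
  obtain ⟨d₀, rfl⟩ := residue_surjective (R := R) d
  rw [stmt8_residue_smul_ctg, stmt8_residue_smul_ctg] at hcd
  refine ⟨c₀, d₀, ?_⟩
  have hadd : stmt8ctg (Ideal.mul_mem_left _ c₀ hw) + stmt8ctg (Ideal.mul_mem_left _ d₀ ht) =
      stmt8ctg (add_mem (Ideal.mul_mem_left mI c₀ hw) (Ideal.mul_mem_left mI d₀ ht)) := by
    unfold stmt8ctg
    rw [← map_add]
    rfl
  have h1 : stmt8ctg hv =
      stmt8ctg (add_mem (Ideal.mul_mem_left mI c₀ hw) (Ideal.mul_mem_left mI d₀ ht)) := by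
    rw [← hcd, hadd]
  exact (stmt8ctg_eq_iff _ _).mp h1

lemma stmt8_exists_compl (hdim : finrank KK (CotangentSpace R) = 2) {w : R} (hw : w ∈ mI) :
    ∃ s, s ∈ mI ∧ ∀ c : R, s - c * w ∉ mI ^ 2 := by
  by_contra h
  push_neg at h
  have htop : span KK {stmt8ctg hw} = ⊤ := by
    rw [eq_top_iff]
    rintro v -
    obtain ⟨⟨s, hs⟩, rfl⟩ := Ideal.toCotangent_surjective _ v
    obtain ⟨c, hc⟩ := h s hs
    exact (stmt8ctg_mem_span_iff hw hs).mpr ⟨c, hc⟩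
  rcases eq_or_ne (stmt8ctg hw) 0 with h0 | h0
  · rw [h0, Submodule.span_zero_singleton] at htop
    have : finrank KK (CotangentSpace R) = 0 := by
      rw [← finrank_top KK (CotangentSpace R), ← htop, finrank_bot]
    omega
  · have h1 : finrank KK (span KK {stmt8ctg hw}) = 1 := finrank_span_singleton h0
    rw [htop, finrank_top KK (CotangentSpace R)] at h1
    omega

lemma stmt8_span_pair_top (hdim : finrank KK (CotangentSpace R) = 2) {w a : R} (hw : w ∈ mI)
    (hw2 : w ∉ mI ^ 2) (ha : a ∈ mI) (hns : ∀ c : R, a - c * w ∉ mI ^ 2) :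
    span KK {stmt8ctg hw, stmt8ctg ha} = ⊤ := by
  have hw0 : stmt8ctg hw ≠ 0 := fun h => hw2 ((stmt8ctg_eq_zero_iff hw).mp h)
  have hna : stmt8ctg ha ∉ span KK {stmt8ctg hw} := by
    rw [stmt8ctg_mem_span_iff hw ha]
    rintro ⟨c, hc⟩
    exact hns c hc
  exact stmt8_span_pair_eq_top hdim hw0 hna

lemma stmt8_mul_mem_sq {a b : R} (ha : a ∈ mI) (hb : b ∈ mI) : a * b ∈ mI ^ 2 := by
  rw [pow_two]; exact Ideal.mul_mem_mul ha hb

lemma stmt8_sq_mul_eq_zero (h3 : mI ^ 3 = ⊥) {a b : R} (ha : a ∈ mI ^ 2) (hb : b ∈ mI) :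
    a * b = 0 := by
  have h : a * b ∈ mI ^ 3 := by
    rw [pow_succ]
    exact Ideal.mul_mem_mul ha hb
  rw [h3] at h
  exact h

lemma stmt8_mem_annIdeal {x a : R} : a ∈ annIdeal R x ↔ x * a = 0 := by
  simp [annIdeal, LinearMap.mem_ker]

lemma stmt8_mem_socle {a : R} :
    a ∈ Submodule.annihilator (IsLocalRing.maximalIdeal R : Submodule R R) ↔
      ∀ b ∈ mI, a * b = 0 := by
  rw [Submodule.mem_annihilator]
  simp [smul_eq_mul]

lemma stmt8_exists_not_sq (hdim : finrank KK (CotangentSpace R) = 2) :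
    ∃ x, x ∈ mI ∧ x ∉ mI ^ 2 := by
  obtain ⟨s, hs, hns⟩ := stmt8_exists_compl hdim (zero_mem mI)
  exact ⟨s, hs, by simpa using hns 0⟩

end CotangentAux

/-! ### The Gorenstein condition via a "good socle" -/

section MainAux

open IsLocalRing Submodule Module

set_option linter.unusedSectionVars false

universe u

/-- The socle is nonzero and generated by each of its nonzero elements. -/
def Stmt8GoodSocle (R : Type u) [CommRing R] [IsLocalRing R] : Prop :=
  (∃ z, z ∈ Submodule.annihilator (IsLocalRing.maximalIdeal R : Submodule R R) ∧ z ≠ 0) ∧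
  ∀ z ∈ Submodule.annihilator (IsLocalRing.maximalIdeal R : Submodule R R), z ≠ 0 →
    ∀ y ∈ Submodule.annihilator (IsLocalRing.maximalIdeal R : Submodule R R), ∃ c : R, y = c * z

variable {R : Type u} [CommRing R] [IsNoetherianRing R] [IsLocalRing R]

local notation "mI" => IsLocalRing.maximalIdeal R
local notation "KK" => IsLocalRing.ResidueField R
local notation "SS" => Submodule.annihilator (IsLocalRing.maximalIdeal R : Submodule R R)

lemma stmt8_good_iff_simple :
    Stmt8GoodSocle R ↔ IsSimpleModule R ↥(SS) := by
  constructor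
  · rintro ⟨⟨z, hzS, hz0⟩, hgen⟩
    have hnt : Nontrivial ↥(SS) :=
      ⟨⟨⟨z, hzS⟩, 0, fun h => hz0 (by simpa using congrArg Subtype.val h)⟩⟩
    have hnt2 : Nontrivial (Submodule R ↥(SS)) := (Submodule.nontrivial_iff R).mpr hnt
    refine { toIsSimpleOrder := ⟨fun N => ?_⟩ }
    rcases eq_or_ne N ⊥ with h | h
    · exact Or.inl h
    · refine Or.inr (eq_top_iff.mpr ?_)
      obtain ⟨y0, hy0N, hy00⟩ := Submodule.exists_mem_ne_zero_of_ne_bot h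
      rintro ⟨y, hy⟩ -
      have hy0c : (y0 : R) ≠ 0 := fun hc => hy00 (Subtype.ext hc)
      obtain ⟨c, hc⟩ := hgen (y0 : R) y0.2 hy0c y hy
      have : (⟨y, hy⟩ : ↥(SS)) = c • y0 := by
        apply Subtype.ext
        simpa [smul_eq_mul] using hc
      rw [this]
      exact Submodule.smul_mem N c hy0N
  · intro hs
    have hnt : Nontrivial ↥(SS) := (Submodule.nontrivial_iff R).mp hs.1.1
    obtain ⟨v, hv0⟩ := exists_ne (0 : ↥(SS))
    refine ⟨⟨(v : R), v.2, fun h => hv0 (Subtype.ext h)⟩, ?_⟩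
    intro z hzS hz0 y hyS
    have hspan : Submodule.span R {(⟨z, hzS⟩ : ↥(SS))} = ⊤ := by
      rcases hs.1.2 (Submodule.span R {(⟨z, hzS⟩ : ↥(SS))}) with h | h
      · exfalso
        have : (⟨z, hzS⟩ : ↥(SS)) ∈ Submodule.span R {(⟨z, hzS⟩ : ↥(SS))} :=
          Submodule.mem_span_singleton_self _
        rw [h] at this
        exact hz0 (by simpa using congrArg Subtype.val this)
      · exact h
    have : (⟨y, hyS⟩ : ↥(SS)) ∈ Submodule.span R {(⟨z, hzS⟩ : ↥(SS))} := by
      rw [hspan]; trivial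
    obtain ⟨c, hc⟩ := Submodule.mem_span_singleton.mp this
    exact ⟨c, by simpa [smul_eq_mul, eq_comm] using congrArg Subtype.val hc⟩

lemma stmt8_good_of_ezd (hdim : finrank KK (CotangentSpace R) = 2)
    (h3 : mI ^ 3 = ⊥) {x : R} (hx : IsExactZeroDivisor R x) : Stmt8GoodSocle R := by
  obtain ⟨hx0, hxu, w, hax, haw⟩ := hx
  have hxm : x ∈ mI := (mem_maximalIdeal x).mpr (mem_nonunits_iff.mpr hxu)
  have hA : ∀ a : R, x * a = 0 ↔ a ∈ Ideal.span {w} := fun a => by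
    rw [← hax]; exact stmt8_mem_annIdeal.symm
  have hB : ∀ a : R, w * a = 0 ↔ a ∈ Ideal.span {x} := fun a => by
    rw [← haw]; exact stmt8_mem_annIdeal.symm
  have hw0 : w ≠ 0 := by
    rintro rfl
    have hxx : x * (x * x) = 0 := by
      have := stmt8_sq_mul_eq_zero h3 (stmt8_mul_mem_sq hxm hxm) hxm
      calc x * (x * x) = x * x * x := by ring
      _ = 0 := this
    have h1 : x * x = 0 := by
      have := (hA (x * x)).mp hxx
      rwa [Ideal.span_singleton_eq_bot.mpr rfl, Ideal.mem_bot] at this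
    have h2 : x = 0 := by
      have := (hA x).mp h1
      rwa [Ideal.span_singleton_eq_bot.mpr rfl, Ideal.mem_bot] at this
    exact hx0 h2
  have hwu : ¬IsUnit w := by
    intro h
    have h1 : (1 : R) ∈ Ideal.span {w} := by
      rw [Ideal.span_singleton_eq_top.mpr h]; trivial
    have := (hA 1).mpr h1
    rw [mul_one] at this
    exact hx0 this
  have hwm : w ∈ mI := (mem_maximalIdeal w).mpr (mem_nonunits_iff.mpr hwu)
  have hxw : x * w = 0 := (hA w).mpr (Ideal.mem_span_singleton_self w)
  have key0 : ¬ ∀ a ∈ mI, x * a = 0 := by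
    intro hall
    obtain ⟨s, hs, hns⟩ := stmt8_exists_compl hdim hwm
    obtain ⟨c, hc⟩ := Ideal.mem_span_singleton'.mp ((hA s).mp (hall s hs))
    exact hns c (by rw [← hc, sub_self]; exact zero_mem _)
  have key0w : ¬ ∀ a ∈ mI, w * a = 0 := by
    intro hall
    obtain ⟨s, hs, hns⟩ := stmt8_exists_compl hdim hxm
    obtain ⟨c, hc⟩ := Ideal.mem_span_singleton'.mp ((hB s).mp (hall s hs))
    exact hns c (by rw [← hc, sub_self]; exact zero_mem _)
  have hxs : x ∉ mI ^ 2 := fun h => key0 (fun a ha => stmt8_sq_mul_eq_zero h3 h ha)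
  have hws : w ∉ mI ^ 2 := fun h => key0w (fun a ha => stmt8_sq_mul_eq_zero h3 h ha)
  have hm2x : ∀ z ∈ mI ^ 2, ∃ t, t ∈ mI ∧ z = x * t := by
    intro z hz
    have hwz : w * z = 0 := by
      rw [mul_comm]; exact stmt8_sq_mul_eq_zero h3 hz hwm
    obtain ⟨c, hc⟩ := Ideal.mem_span_singleton'.mp ((hB z).mp hwz)
    by_cases hcu : IsUnit c
    · exfalso
      obtain ⟨u, rfl⟩ := hcu
      have hxz : x = (↑u⁻¹ : R) * z := by
        rw [← hc, ← mul_assoc, Units.inv_mul, one_mul]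
      exact hxs (hxz ▸ Ideal.mul_mem_left _ _ hz)
    · exact ⟨c, (mem_maximalIdeal c).mpr (mem_nonunits_iff.mpr hcu), by rw [← hc, mul_comm]⟩
  have hm2w : ∀ z ∈ mI ^ 2, ∃ t, t ∈ mI ∧ z = w * t := by
    intro z hz
    have hxz : x * z = 0 := by
      rw [mul_comm]; exact stmt8_sq_mul_eq_zero h3 hz hxm
    obtain ⟨c, hc⟩ := Ideal.mem_span_singleton'.mp ((hA z).mp hxz)
    by_cases hcu : IsUnit c
    · exfalso
      obtain ⟨u, rfl⟩ := hcu
      have hwz : w = (↑u⁻¹ : R) * z := by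
        rw [← hc, ← mul_assoc, Units.inv_mul, one_mul]
      exact hws (hwz ▸ Ideal.mul_mem_left _ _ hz)
    · exact ⟨c, (mem_maximalIdeal c).mpr (mem_nonunits_iff.mpr hcu), by rw [← hc, mul_comm]⟩
  have hm2ne : mI ^ 2 ≠ ⊥ := by
    intro h
    apply key0
    intro a ha
    have := stmt8_mul_mem_sq hxm ha
    rw [h] at this
    exact (Submodule.mem_bot R).mp this
  obtain ⟨z, hzm2, hz0⟩ := Submodule.exists_mem_ne_zero_of_ne_bot hm2ne
  obtain ⟨t, htm, hzt⟩ := hm2x z hzm2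
  have hxt0 : x * t ≠ 0 := fun h => hz0 (hzt.trans h)
  have htw : ∀ c : R, t - c * w ∉ mI ^ 2 := by
    intro c hc
    apply hxt0
    have h1 : x * (t - c * w) = 0 := by
      rw [mul_comm]; exact stmt8_sq_mul_eq_zero h3 hc hxm
    have h2 : x * t = x * (t - c * w) + c * (x * w) := by ring
    rw [h1, hxw] at h2
    simpa using h2
  have hpair : span KK {stmt8ctg hwm, stmt8ctg htm} = ⊤ :=
    stmt8_span_pair_top hdim hwm hws htm htw
  have hgen2 : ∀ y ∈ mI ^ 2, ∃ c : R, y = c * z := by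
    intro y hy
    obtain ⟨s, hsm, hys⟩ := hm2x y hy
    have hmem : stmt8ctg hsm ∈ span KK {stmt8ctg hwm, stmt8ctg htm} := by
      rw [hpair]; trivial
    obtain ⟨c, d, hcd⟩ := stmt8ctg_mem_span_pair hwm htm hsm hmem
    refine ⟨d, ?_⟩
    have h1 : x * (s - (c * w + d * t)) = 0 := by
      rw [mul_comm]; exact stmt8_sq_mul_eq_zero h3 hcd hxm
    calc y = x * s := hys
    _ = d * (x * t) + c * (x * w) + x * (s - (c * w + d * t)) := by ring
    _ = d * (x * t) := by rw [hxw, h1]; ring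
    _ = d * z := by rw [hzt]
  have hsoc_sub : ∀ s ∈ SS, s ∈ mI ^ 2 := by
    intro s hs
    rw [stmt8_mem_socle] at hs
    have hws' : w * s = 0 := by rw [mul_comm]; exact hs w hwm
    obtain ⟨c, hc⟩ := Ideal.mem_span_singleton'.mp ((hB s).mp hws')
    by_cases hcu : IsUnit c
    · exfalso
      apply key0
      intro a ha
      obtain ⟨u, rfl⟩ := hcu
      have hxf : x = (↑u⁻¹ : R) * s := by
        rw [← hc, ← mul_assoc, Units.inv_mul, one_mul]
      rw [hxf, mul_assoc, hs a ha, mul_zero]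
    · rw [← hc]
      exact stmt8_mul_mem_sq ((mem_maximalIdeal c).mpr (mem_nonunits_iff.mpr hcu)) hxm
  have hm2_soc : ∀ y ∈ mI ^ 2, y ∈ SS := fun y hy =>
    stmt8_mem_socle.mpr (fun b hb => stmt8_sq_mul_eq_zero h3 hy hb)
  refine ⟨⟨z, hm2_soc z hzm2, hz0⟩, ?_⟩
  intro z' hz'S hz'0 y hyS
  obtain ⟨c', hc'⟩ := hgen2 z' (hsoc_sub z' hz'S)
  obtain ⟨c, hc⟩ := hgen2 y (hsoc_sub y hyS)
  by_cases hcu : IsUnit c'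
  · obtain ⟨u, rfl⟩ := hcu
    refine ⟨c * ↑u⁻¹, ?_⟩
    rw [hc', hc, ← mul_assoc, mul_assoc _ _ (↑u : R), Units.inv_mul, mul_one]
  · exfalso
    apply hz'0
    have hc'm : c' ∈ mI := (mem_maximalIdeal c').mpr (mem_nonunits_iff.mpr hcu)
    have hzS : z ∈ SS := hm2_soc z hzm2
    rw [stmt8_mem_socle] at hzS
    rw [hc', mul_comm]
    exact hzS c' hc'm

lemma stmt8_ezd_of_good (hdim : finrank KK (CotangentSpace R) = 2)
    (h3 : mI ^ 3 = ⊥) (hg : Stmt8GoodSocle R) {x : R} (hxm : x ∈ mI) (hx2 : x ∉ mI ^ 2) :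
    IsExactZeroDivisor R x := by
  obtain ⟨⟨z0, hz0S, hz00⟩, hgenAll⟩ := hg
  have hx0 : x ≠ 0 := fun h => hx2 (h ▸ zero_mem _)
  have hxu : ¬IsUnit x := mem_nonunits_iff.mp ((mem_maximalIdeal x).mp hxm)
  have hm2_soc : ∀ y ∈ mI ^ 2, y ∈ SS := fun y hy =>
    stmt8_mem_socle.mpr (fun b hb => stmt8_sq_mul_eq_zero h3 hy hb)
  have hm2ne : mI ^ 2 ≠ ⊥ := by
    intro hbot
    have hmS : ∀ a ∈ mI, a ∈ SS := by
      intro a ha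
      refine stmt8_mem_socle.mpr (fun b hb => ?_)
      have := stmt8_mul_mem_sq ha hb
      rw [hbot] at this
      exact (Submodule.mem_bot R).mp this
    obtain ⟨s, hs, hns⟩ := stmt8_exists_compl hdim hxm
    obtain ⟨c, hc⟩ := hgenAll x (hmS x hxm) hx0 s (hmS s hs)
    exact hns c (by rw [hc, sub_self]; exact zero_mem _)
  have hsoc_m2 : ∀ y ∈ SS, y ∈ mI ^ 2 := by
    intro y hy
    obtain ⟨z1, hz1, hz10⟩ := Submodule.exists_mem_ne_zero_of_ne_bot hm2ne
    obtain ⟨c, hc⟩ := hgenAll z1 (hm2_soc z1 hz1) hz10 y hy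
    rw [hc]
    exact Ideal.mul_mem_left _ _ hz1
  have hxt : ∃ t, t ∈ mI ∧ x * t ≠ 0 := by
    by_contra h
    push_neg at h
    exact hx2 (hsoc_m2 x (stmt8_mem_socle.mpr h))
  obtain ⟨t, htm, hxt0⟩ := hxt
  have hxtm2 : x * t ∈ mI ^ 2 := stmt8_mul_mem_sq hxm htm
  have hxtS : x * t ∈ SS := hm2_soc _ hxtm2
  have htm2 : t ∉ mI ^ 2 := fun h =>
    hxt0 (by rw [mul_comm]; exact stmt8_sq_mul_eq_zero h3 h hxm)
  obtain ⟨s, hsm, hns⟩ := stmt8_exists_compl hdim htm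
  have hxsm2 : x * s ∈ mI ^ 2 := stmt8_mul_mem_sq hxm hsm
  obtain ⟨c, hc⟩ := hgenAll (x * t) hxtS hxt0 (x * s) (hm2_soc _ hxsm2)
  set w := s - c * t with hwdef
  have hwm : w ∈ mI := sub_mem hsm (Ideal.mul_mem_left _ _ htm)
  have hwm2 : w ∉ mI ^ 2 := hns c
  have hxw : x * w = 0 := by
    have : x * (s - c * t) = x * s - c * (x * t) := by ring
    rw [hwdef, this, hc]
    ring
  have hw0 : w ≠ 0 := fun h => hwm2 (h ▸ zero_mem _)
  have hwt : ∃ t', t' ∈ mI ∧ w * t' ≠ 0 := by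
    by_contra h
    push_neg at h
    exact hwm2 (hsoc_m2 w (stmt8_mem_socle.mpr h))
  obtain ⟨t', ht'm, hwt0⟩ := hwt
  have hwt'm2 : w * t' ∈ mI ^ 2 := stmt8_mul_mem_sq hwm ht'm
  have ht'm2 : t' ∉ mI ^ 2 := fun h =>
    hwt0 (by rw [mul_comm]; exact stmt8_sq_mul_eq_zero h3 h hwm)
  have hm2_xmul : ∀ y ∈ mI ^ 2, ∃ u, y = x * u := by
    intro y hy
    obtain ⟨d, hd⟩ := hgenAll (x * t) hxtS hxt0 y (hm2_soc y hy)
    exact ⟨d * t, by rw [hd]; ring⟩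
  have hm2_wmul : ∀ y ∈ mI ^ 2, ∃ u, y = w * u := by
    intro y hy
    obtain ⟨d, hd⟩ := hgenAll (w * t') (hm2_soc _ hwt'm2) hwt0 y (hm2_soc y hy)
    exact ⟨d * t', by rw [hd]; ring⟩
  refine ⟨hx0, hxu, w, ?_, ?_⟩
  · apply le_antisymm
    · intro a ha
      rw [stmt8_mem_annIdeal] at ha
      have ham : a ∈ mI := by
        by_contra h
        have hau : IsUnit a := by
          by_contra h2
          exact h ((mem_maximalIdeal a).mpr (mem_nonunits_iff.mpr h2))
        obtain ⟨u, rfl⟩ := hau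
        apply hx0
        calc x = x * ↑u * ↑u⁻¹ := by rw [mul_assoc, Units.mul_inv, mul_one]
        _ = 0 := by rw [ha, zero_mul]
      have hspan : ∃ e : R, a - e * w ∈ mI ^ 2 := by
        by_contra h
        push_neg at h
        have hp : span KK {stmt8ctg hwm, stmt8ctg ham} = ⊤ :=
          stmt8_span_pair_top hdim hwm hwm2 ham h
        have hmem : stmt8ctg htm ∈ span KK {stmt8ctg hwm, stmt8ctg ham} := by
          rw [hp]; trivial
        obtain ⟨c1, d1, hcd⟩ := stmt8ctg_mem_span_pair hwm ham htm hmem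
        apply hxt0
        have h1 : x * (t - (c1 * w + d1 * a)) = 0 := by
          rw [mul_comm]; exact stmt8_sq_mul_eq_zero h3 hcd hxm
        calc x * t = c1 * (x * w) + d1 * (x * a) + x * (t - (c1 * w + d1 * a)) := by ring
        _ = 0 := by rw [hxw, ha, h1]; ring
      obtain ⟨e, he⟩ := hspan
      obtain ⟨u, hu⟩ := hm2_wmul _ he
      rw [Ideal.mem_span_singleton']
      refine ⟨e + u, ?_⟩
      have : a = e * w + w * u := by rw [← hu]; ring
      rw [this]; ring
    · exact (Ideal.span_singleton_le_iff_mem _).mpr (stmt8_mem_annIdeal.mpr hxw)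
  · apply le_antisymm
    · intro a ha
      rw [stmt8_mem_annIdeal] at ha
      have ham : a ∈ mI := by
        by_contra h
        have hau : IsUnit a := by
          by_contra h2
          exact h ((mem_maximalIdeal a).mpr (mem_nonunits_iff.mpr h2))
        obtain ⟨u, rfl⟩ := hau
        apply hw0
        calc w = w * ↑u * ↑u⁻¹ := by rw [mul_assoc, Units.mul_inv, mul_one]
        _ = 0 := by rw [ha, zero_mul]
      have hspan : ∃ e : R, a - e * x ∈ mI ^ 2 := by
        by_contra h
        push_neg at h
        have hp : span KK {stmt8ctg hxm, stmt8ctg ham} = ⊤ :=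
          stmt8_span_pair_top hdim hxm hx2 ham h
        have hmem : stmt8ctg ht'm ∈ span KK {stmt8ctg hxm, stmt8ctg ham} := by
          rw [hp]; trivial
        obtain ⟨c1, d1, hcd⟩ := stmt8ctg_mem_span_pair hxm ham ht'm hmem
        apply hwt0
        have h1 : w * (t' - (c1 * x + d1 * a)) = 0 := by
          rw [mul_comm]; exact stmt8_sq_mul_eq_zero h3 hcd hwm
        have hwx : w * x = 0 := by rw [mul_comm]; exact hxw
        calc w * t' = c1 * (w * x) + d1 * (w * a) + w * (t' - (c1 * x + d1 * a)) := by ring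
        _ = 0 := by rw [hwx, ha, h1]; ring
      obtain ⟨e, he⟩ := hspan
      obtain ⟨u, hu⟩ := hm2_xmul _ he
      rw [Ideal.mem_span_singleton']
      refine ⟨e + u, ?_⟩
      have : a = e * x + x * u := by rw [← hu]; ring
      rw [this]; ring
    · exact (Ideal.span_singleton_le_iff_mem _).mpr
        (stmt8_mem_annIdeal.mpr (by rw [mul_comm]; exact hxw))

end MainAux

/-- for a commutative noetherian local ring `(R, m, k)` of
embedding dimension `2` with `m³ = 0`, the following are equivalent:
(i) there is an exact zero divisor in `R`;
(ii) every element of `m \ m²` is an exact zero divisor;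
(iii) `R` is Gorenstein (for this artinian local ring: the socle `ann(m)` is
one-dimensional over `k`, i.e. has length `1`). -/
theorem stmt8 (R : Type u) [CommRing R] [IsNoetherianRing R] [IsLocalRing R]
    (hdim : Module.finrank (IsLocalRing.ResidueField R) (IsLocalRing.CotangentSpace R) = 2)
    (h3 : (IsLocalRing.maximalIdeal R) ^ 3 = ⊥) :
    ((∃ x, IsExactZeroDivisor R x) ↔
      (∀ x, x ∈ IsLocalRing.maximalIdeal R → x ∉ (IsLocalRing.maximalIdeal R) ^ 2 →
        IsExactZeroDivisor R x)) ∧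
    ((∃ x, IsExactZeroDivisor R x) ↔
      moduleLength R (↥(Submodule.annihilator
        (IsLocalRing.maximalIdeal R : Submodule R R))) = (1 : ℕ∞)) := by
  have hconv : moduleLength R (↥(Submodule.annihilator
      (IsLocalRing.maximalIdeal R : Submodule R R))) = (1 : ℕ∞) ↔ Stmt8GoodSocle R :=
    stmt8_moduleLength_eq_one_iff.trans stmt8_good_iff_simple.symm
  have hAC : (∃ x, IsExactZeroDivisor R x) → Stmt8GoodSocle R := by
    rintro ⟨x, hx⟩
    exact stmt8_good_of_ezd hdim h3 hx
  have hCB : Stmt8GoodSocle R → ∀ x, x ∈ IsLocalRing.maximalIdeal R →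
      x ∉ (IsLocalRing.maximalIdeal R) ^ 2 → IsExactZeroDivisor R x :=
    fun hg x hxm hx2 => stmt8_ezd_of_good hdim h3 hg hxm hx2
  have hBA : (∀ x, x ∈ IsLocalRing.maximalIdeal R →
      x ∉ (IsLocalRing.maximalIdeal R) ^ 2 → IsExactZeroDivisor R x) →
      ∃ x, IsExactZeroDivisor R x := by
    intro hb
    obtain ⟨x, h1, h2⟩ := stmt8_exists_not_sq hdim
    exact ⟨x, hb x h1 h2⟩
  exact ⟨⟨fun hA => hCB (hAC hA), hBA⟩,
    ⟨fun hA => hconv.mpr (hAC hA), fun hC => hBA (hCB (hconv.mp hC))⟩⟩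
end

section
/- Let (R, m) be a commutative noetherian local ring with m³ = 0 and embedding dimension at least 3, and suppose w and x form an exact pair of zero divisors in R. Then for every element y in m \ (w, x) there exists an element z in m \ m² with yz = 0 and z ∉ (x) + m². -/
open IsLocalRing Module

/-- `m²` is annihilated by `m` when `m³ = 0`. -/
theorem auxTorsion (R : Type u) [CommRing R] [IsLocalRing R]
    (h3 : (maximalIdeal R) ^ 3 = ⊥) :
    Module.IsTorsionBySet R (↥((maximalIdeal R) ^ 2)) ((maximalIdeal R) : Set R) := by
  rintro ⟨u, hu⟩ ⟨a, ha⟩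
  have h : a * u ∈ (maximalIdeal R) ^ 3 := by
    rw [show (3 : ℕ) = 1 + 2 from rfl, pow_add, pow_one]
    exact Ideal.mul_mem_mul ha hu
  rw [h3, Ideal.mem_bot] at h
  exact Subtype.ext (by simpa using h)

/-- let `(R, m)` be a commutative noetherian local ring with
`m³ = 0` and embedding dimension at least `3`, and suppose `w, x` form an
exact pair of zero divisors.  Then for every `y ∈ m \ (w, x)` there exists
`z ∈ m \ m²` with `yz = 0` and `z ∉ (x) + m²`. -/
theorem stmt11 (R : Type u) [CommRing R] [IsNoetherianRing R] [IsLocalRing R]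
    (h3 : (IsLocalRing.maximalIdeal R) ^ 3 = ⊥)
    (hdim : 3 ≤ Module.finrank (IsLocalRing.ResidueField R) (IsLocalRing.CotangentSpace R))
    (w x : R) (hx0 : x ≠ 0) (hxu : ¬ IsUnit x) (hw0 : w ≠ 0) (hwu : ¬ IsUnit w)
    (h1 : annIdeal R x = Ideal.span {w}) (h2 : annIdeal R w = Ideal.span {x})
    (y : R) (hy : y ∈ IsLocalRing.maximalIdeal R) (hy' : y ∉ Ideal.span {w, x}) :
    ∃ z, z ∈ IsLocalRing.maximalIdeal R ∧ z ∉ (IsLocalRing.maximalIdeal R) ^ 2 ∧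
      y * z = 0 ∧ z ∉ Ideal.span {x} + (IsLocalRing.maximalIdeal R) ^ 2 := by
  classical
  by_contra hcon
  -- basic memberships
  have hxm : x ∈ maximalIdeal R := hxu
  have hwm : w ∈ maximalIdeal R := hwu
  -- characterization of the annihilator ideal
  have hann : ∀ a z : R, z ∈ annIdeal R a ↔ a * z = 0 := fun a z => by
    simp [annIdeal, LinearMap.mem_ker]
  have hannx : ∀ z : R, x * z = 0 ↔ z ∈ Ideal.span {w} := fun z => by
    rw [← h1]; exact (hann x z).symm
  have hannw : ∀ z : R, w * z = 0 ↔ z ∈ Ideal.span {x} := fun z => by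
    rw [← h2]; exact (hann w z).symm
  -- products with m² vanish
  have hm3 : ∀ a ∈ maximalIdeal R, ∀ b ∈ (maximalIdeal R) ^ 2, a * b = 0 := by
    intro a ha b hb
    have h : a * b ∈ (maximalIdeal R) ^ 3 := by
      rw [show (3 : ℕ) = 1 + 2 from rfl, pow_add, pow_one]
      exact Ideal.mul_mem_mul ha hb
    rwa [h3, Ideal.mem_bot] at h
  -- x ∉ m²
  have hx2 : x ∉ (maximalIdeal R) ^ 2 := by
    intro hx2
    have hprin : maximalIdeal R = Ideal.span {w} := by
      apply le_antisymm
      · intro a ha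
        exact (hannx a).mp (by rw [mul_comm]; exact hm3 a ha x hx2)
      · rwa [Ideal.span_le, Set.singleton_subset_iff]
    have : finrank (ResidueField R) (CotangentSpace R) ≤ 1 :=
      IsLocalRing.finrank_cotangentSpace_le_one_iff.mpr ⟨⟨w, hprin⟩⟩
    omega
  -- w ∉ m²
  have hw2 : w ∉ (maximalIdeal R) ^ 2 := by
    intro hw2
    have hprin : maximalIdeal R = Ideal.span {x} := by
      apply le_antisymm
      · intro a ha
        exact (hannw a).mp (by rw [mul_comm]; exact hm3 a ha w hw2)
      · rwa [Ideal.span_le, Set.singleton_subset_iff]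
    have : finrank (ResidueField R) (CotangentSpace R) ≤ 1 :=
      IsLocalRing.finrank_cotangentSpace_le_one_iff.mpr ⟨⟨x, hprin⟩⟩
    omega
  -- m² = x·m
  have hm2x : ∀ u ∈ (maximalIdeal R) ^ 2, ∃ c ∈ maximalIdeal R, u = c * x := by
    intro u hu
    obtain ⟨c, hc⟩ := Ideal.mem_span_singleton'.mp ((hannw u).mp (hm3 w hwm u hu))
    refine ⟨c, ?_, hc.symm⟩
    by_contra hc2
    have hcu : IsUnit c := by
      by_contra h; exact hc2 h
    obtain ⟨e, rfl⟩ := hcu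
    have : x = (↑e⁻¹ : R) * u := by
      rw [← hc, ← mul_assoc]
      simp
    exact hx2 (this ▸ Ideal.mul_mem_left _ _ hu)
  -- the key negated hypothesis
  have key : ∀ z ∈ maximalIdeal R, y * z = 0 →
      z ∈ Ideal.span {x} + (maximalIdeal R) ^ 2 := by
    intro z hz hz0
    by_cases h2' : z ∈ (maximalIdeal R) ^ 2
    · exact Submodule.mem_sup_right h2'
    · by_contra hns
      exact hcon ⟨z, hz, h2', hz0, hns⟩
  -- the residue field module structure on m²
  letI : Module (ResidueField R) ↥((maximalIdeal R) ^ 2) := (auxTorsion R h3).module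
  letI : IsScalarTower R (ResidueField R) ↥((maximalIdeal R) ^ 2) :=
    Module.IsTorsionBySet.isScalarTower (auxTorsion R h3)
  -- multiplication maps μ_a : m/m² → m²
  have mulLin : ∀ a : R, a ∈ maximalIdeal R →
      ∃ g : CotangentSpace R →ₗ[ResidueField R] ↥((maximalIdeal R) ^ 2),
        ∀ z : ↥(maximalIdeal R),
          ((g ((maximalIdeal R).toCotangent z) : R)) = a * (z : R) := by
    intro a ha
    have hf : ∀ z : ↥(maximalIdeal R), a * (z : R) ∈ (maximalIdeal R) ^ 2 := fun z => by
      rw [pow_two]; exact Ideal.mul_mem_mul ha z.2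
    let f : ↥(maximalIdeal R) →ₗ[R] ↥((maximalIdeal R) ^ 2) :=
      { toFun := fun z => ⟨a * (z : R), hf z⟩
        map_add' := fun z₁ z₂ => Subtype.ext (by simp [mul_add])
        map_smul' := fun r z => Subtype.ext (by simp [smul_eq_mul]; ring) }
    have hker : ((maximalIdeal R) • ⊤ : Submodule R ↥(maximalIdeal R)) ≤ LinearMap.ker f := by
      intro t ht
      refine Submodule.smul_induction_on ht ?_ ?_
      · rintro r hr z -
        refine LinearMap.mem_ker.mpr (Subtype.ext ?_)
        show a * (r * (z : R)) = 0
        rw [show a * (r * (z : R)) = r * (a * (z : R)) by ring]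
        exact hm3 r hr _ (hf z)
      · intro u v hu hv
        rw [LinearMap.mem_ker] at *
        rw [map_add, hu, hv, add_zero]
    let g₀ : CotangentSpace R →ₗ[R] ↥((maximalIdeal R) ^ 2) :=
      Submodule.liftQ _ f hker
    refine ⟨{ toFun := g₀, map_add' := map_add g₀, map_smul' := ?_ }, ?_⟩
    · intro c v
      obtain ⟨r, rfl⟩ := Ideal.Quotient.mk_surjective c
      have hmk : (Ideal.Quotient.mk (maximalIdeal R) r) = algebraMap R (ResidueField R) r := rfl
      show g₀ (algebraMap R (ResidueField R) r • v) = algebraMap R (ResidueField R) r • g₀ v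
      rw [algebraMap_smul, algebraMap_smul]
      exact map_smul g₀ r v
    · intro z
      rfl
  obtain ⟨gx, hgx⟩ := mulLin x hxm
  obtain ⟨gy, hgy⟩ := mulLin y hy
  set wbar := (maximalIdeal R).toCotangent ⟨w, hwm⟩ with hwbar
  set xbar := (maximalIdeal R).toCotangent ⟨x, hxm⟩ with hxbar
  have hwbar0 : wbar ≠ 0 := fun h => hw2 ((Ideal.toCotangent_eq_zero _ _).mp h)
  -- gx is surjective
  have hgx_surj : Function.Surjective gx := by
    rintro ⟨u, hu⟩
    obtain ⟨c, hcm, rfl⟩ := hm2x u hu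
    exact ⟨(maximalIdeal R).toCotangent ⟨c, hcm⟩, Subtype.ext (by rw [hgx]; ring)⟩
  -- kernel of gx is the line spanned by wbar
  have hker_gx : LinearMap.ker gx = Submodule.span (ResidueField R) {wbar} := by
    apply le_antisymm
    · intro v hv
      obtain ⟨z, rfl⟩ := Ideal.toCotangent_surjective _ v
      have hxz : x * (z : R) = 0 := by
        have := congrArg (fun t : ↥((maximalIdeal R) ^ 2) => (t : R)) (LinearMap.mem_ker.mp hv)
        simpa [hgx] using this
      obtain ⟨c, hc⟩ := Ideal.mem_span_singleton.mp ((hannx _).mp hxz)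
      have hzc : z = c • (⟨w, hwm⟩ : ↥(maximalIdeal R)) := by
        apply Subtype.ext
        show (z : R) = c * w
        rw [hc]; ring
      rw [hzc, map_smul, ← algebraMap_smul (ResidueField R) c]
      exact Submodule.smul_mem _ _ (Submodule.mem_span_singleton_self _)
    · rw [Submodule.span_le, Set.singleton_subset_iff]
      refine LinearMap.mem_ker.mpr (Subtype.ext ?_)
      rw [hgx]
      show x * w = (0 : R)
      exact (hannx w).mpr (Ideal.mem_span_singleton_self w)
  -- finite dimensionality and rank computation
  haveI : Module.Finite (ResidueField R) ↥((maximalIdeal R) ^ 2) :=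
    Module.Finite.of_surjective gx hgx_surj
  have hrank := LinearMap.finrank_range_add_finrank_ker gx
  rw [LinearMap.range_eq_top.mpr hgx_surj, finrank_top, hker_gx,
    finrank_span_singleton hwbar0] at hrank
  -- the kernel of gy is nonzero
  have hker_gy : LinearMap.ker gy ≠ ⊥ := by
    intro hbot
    have hinj : Function.Injective gy := LinearMap.ker_eq_bot.mp hbot
    have := LinearMap.finrank_le_finrank_of_injective hinj
    omega
  obtain ⟨v, hvker, hv0⟩ := Submodule.exists_mem_ne_zero_of_ne_bot hker_gy
  obtain ⟨z, rfl⟩ := Ideal.toCotangent_surjective _ v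
  have hyz : y * (z : R) = 0 := by
    have := congrArg (fun t : ↥((maximalIdeal R) ^ 2) => (t : R)) (LinearMap.mem_ker.mp hvker)
    simpa [hgy] using this
  obtain ⟨p, hp, q, hq, hpq⟩ := Submodule.mem_sup.mp (key (z : R) z.2 hyz)
  obtain ⟨a, ha⟩ := Ideal.mem_span_singleton.mp hp
  have hqm : q ∈ maximalIdeal R := Ideal.pow_le_self two_ne_zero hq
  -- v = (residue a) • xbar
  have hz_eq : z = a • (⟨x, hxm⟩ : ↥(maximalIdeal R)) + ⟨q, hqm⟩ := by
    apply Subtype.ext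
    show (z : R) = a * x + q
    rw [← hpq, ha]; ring
  have hv_eq : (maximalIdeal R).toCotangent z
      = (residue R a) • xbar := by
    rw [hz_eq, map_add, map_smul]
    have hq0 : (maximalIdeal R).toCotangent ⟨q, hqm⟩ = 0 :=
      (Ideal.toCotangent_eq_zero _ _).mpr hq
    rw [hq0, add_zero, ← algebraMap_smul (ResidueField R) a xbar]
    rfl
  have hres0 : (residue R a : ResidueField R) ≠ 0 := by
    intro h
    apply hv0
    rw [hv_eq, h, zero_smul]
  -- then gy xbar = 0, so y * x = 0
  have hgyx : gy xbar = 0 := by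
    have h1' : (residue R a) • gy xbar = 0 := by
      rw [← map_smul, ← hv_eq]
      exact LinearMap.mem_ker.mp hvker
    have := congrArg (fun t => (residue R a)⁻¹ • t) h1'
    simpa [smul_smul, inv_mul_cancel₀ hres0] using this
  have hyx : y * x = 0 := by
    have := congrArg (fun t : ↥((maximalIdeal R) ^ 2) => (t : R)) hgyx
    rw [hxbar, hgy] at this
    simpa using this
  have : y ∈ Ideal.span {w} := (hannx y).mp (by rw [mul_comm]; exact hyx)
  exact hy' (Ideal.span_mono (by simp) this)
end

section
/- Let F be a field and S = F[x,y,z]/(x², y²z, yz², y³, z³) with maximal ideal n = (x, y, z). Then x is an exact zero divisor in S, and for every element v in n \ ((x) + n²), the annihilator ann(v) is contained in n². -/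
open MvPolynomial

set_option synthInstance.maxHeartbeats 1000000
set_option maxHeartbeats 1000000

/-- The ring `S = F[x,y,z]/(x², y²z, yz², y³, z³)`. -/
abbrev S12 (F : Type u) [Field F] : Type u :=
  MvPolynomial (Fin 3) F ⧸
    (Ideal.span {(X 0 : MvPolynomial (Fin 3) F) ^ 2, X 1 ^ 2 * X 2, X 1 * X 2 ^ 2,
      X 1 ^ 3, X 2 ^ 3})

/-- The maximal ideal `n = (x, y, z)` of `S12 F`. -/
noncomputable def n12 (F : Type u) [Field F] : Ideal (S12 F) :=
  Ideal.span {Ideal.Quotient.mk _ (X 0), Ideal.Quotient.mk _ (X 1),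
    Ideal.Quotient.mk _ (X 2)}

namespace Stmt12Aux

variable {F : Type u} [Field F]

abbrev R3 (F : Type u) [Field F] := MvPolynomial (Fin 3) F

noncomputable abbrev e (i : Fin 3) : Fin 3 →₀ ℕ := Finsupp.single i 1

noncomputable abbrev Isp (F : Type u) [Field F] : Ideal (R3 F) :=
  Ideal.span {(X 0 : MvPolynomial (Fin 3) F) ^ 2, X 1 ^ 2 * X 2, X 1 * X 2 ^ 2,
      X 1 ^ 3, X 2 ^ 3}

noncomputable abbrev Jid (F : Type u) [Field F] : Ideal (R3 F) := Ideal.span {X 0, X 1, X 2}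

theorem hX (i : Fin 3) : (X i : R3 F) = monomial (e i) 1 := by
  rw [← pow_one (X i), X_pow_eq_monomial]

theorem X_mem_J (i : Fin 3) : (X i : R3 F) ∈ Jid F :=
  Ideal.subset_span (by fin_cases i <;> simp)

theorem coeff_span_monomial_eq_zero {D : Set (Fin 3 →₀ ℕ)} {f : R3 F}
    (hf : f ∈ Ideal.span ((fun d => (monomial d (1 : F) : R3 F)) '' D))
    (m : Fin 3 →₀ ℕ) (hm : ∀ d ∈ D, ¬ d ≤ m) : coeff m f = 0 := by
  have H : ∀ g : R3 F, coeff m (g * f) = 0 := by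
    refine Submodule.span_induction
      (p := fun f _ => ∀ g : R3 F, coeff m (g * f) = 0) ?_ ?_ ?_ ?_ hf
    · rintro x ⟨d, hd, rfl⟩ g
      rw [coeff_mul_monomial', if_neg (hm d hd)]
    · simp
    · intro x y _ _ hx hy g
      simp [mul_add, hx g, hy g]
    · intro a x _ hx g
      rw [smul_eq_mul, show g * (a * x) = g * a * x by ring, hx (g * a)]
  simpa using H 1

theorem coeff_J_pow_eq_zero : ∀ (k : ℕ) (f : R3 F), f ∈ (Jid F) ^ k →
    ∀ (g : R3 F) (m : Fin 3 →₀ ℕ), m 0 + m 1 + m 2 < k → coeff m (g * f) = 0 := by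
  intro k
  induction k with
  | zero => intro f _ g m hm; omega
  | succ k ih =>
    intro f hf
    rw [pow_succ] at hf
    refine Submodule.mul_induction_on hf ?_ ?_
    · intro a ha b hb
      refine Submodule.span_induction
        (p := fun b _ => ∀ (g : R3 F) (m : Fin 3 →₀ ℕ),
          m 0 + m 1 + m 2 < k + 1 → coeff m (g * (a * b)) = 0) ?_ ?_ ?_ ?_ hb
      · rintro x hx g m hm
        have key : ∀ i : Fin 3, coeff m (g * (a * X i)) = 0 := by
          intro i
          rw [← mul_assoc, coeff_mul_X']
          split_ifs with h
          · apply ih a ha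
            have h1 : m i ≠ 0 := Finsupp.mem_support_iff.mp h
            fin_cases i <;>
              simp only [Finsupp.tsub_apply, Finsupp.single_apply] at * <;>
              simp_all <;> omega
          · rfl
        rcases hx with rfl | rfl | rfl
        · exact key 0
        · exact key 1
        · exact key 2
      · intro g m hm; simp
      · intro x y _ _ hx hy g m hm
        rw [mul_add, mul_add, coeff_add, hx g m hm, hy g m hm, add_zero]
      · intro c x _ hx g m hm
        rw [smul_eq_mul, show g * (a * (c * x)) = g * c * (a * x) by ring]
        exact hx (g * c) m hm
    · intro x y hx hy g m hm
      rw [mul_add, coeff_add, hx g m hm, hy g m hm, add_zero]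

theorem coeff_J_pow_eq_zero' {k : ℕ} {f : R3 F} (hf : f ∈ (Jid F) ^ k)
    {m : Fin 3 →₀ ℕ} (hm : m 0 + m 1 + m 2 < k) : coeff m f = 0 := by
  simpa using coeff_J_pow_eq_zero k f hf 1 m hm

theorem le_of_coords {d m : Fin 3 →₀ ℕ} (h0 : d 0 ≤ m 0) (h1 : d 1 ≤ m 1)
    (h2 : d 2 ≤ m 2) : d ≤ m :=
  Finsupp.le_def.mpr fun i => by fin_cases i <;> assumption

theorem monomial_mem_J_pow2 {m : Fin 3 →₀ ℕ} (h2 : 2 ≤ m 0 + m 1 + m 2) (c : F) :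
    (monomial m c : R3 F) ∈ (Jid F) ^ 2 := by
  have key : ∀ i j : Fin 3, e i + e j ≤ m → (monomial m c : R3 F) ∈ (Jid F) ^ 2 := by
    intro i j hij
    have hXX : (X i : R3 F) * X j = monomial (e i + e j) 1 := by
      rw [hX, hX, monomial_mul, one_mul]
    have : (monomial m c : R3 F) = monomial (m - (e i + e j)) c * (X i * X j) := by
      rw [hXX, monomial_mul, mul_one, tsub_add_cancel_of_le hij]
    rw [this, sq]
    exact Ideal.mul_mem_left _ _ (Ideal.mul_mem_mul (X_mem_J i) (X_mem_J j))
  have hs : ∀ i j : Fin 3, (e i + e j) 0 ≤ m 0 → (e i + e j) 1 ≤ m 1 →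
      (e i + e j) 2 ≤ m 2 → (monomial m c : R3 F) ∈ (Jid F) ^ 2 :=
    fun i j a b c' => key i j (le_of_coords a b c')
  by_cases ha : 2 ≤ m 0
  · exact hs 0 0 (by simp; omega) (by simp) (by simp)
  by_cases hb : 2 ≤ m 1
  · exact hs 1 1 (by simp) (by simp; omega) (by simp)
  by_cases hc : 2 ≤ m 2
  · exact hs 2 2 (by simp) (by simp) (by simp; omega)
  by_cases hab : 1 ≤ m 0 ∧ 1 ≤ m 1
  · exact hs 0 1 (by simp [Finsupp.single_apply]; omega) (by simp [Finsupp.single_apply]; omega)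
      (by simp [Finsupp.single_apply])
  by_cases hac : 1 ≤ m 0 ∧ 1 ≤ m 2
  · exact hs 0 2 (by simp [Finsupp.single_apply]; omega) (by simp [Finsupp.single_apply])
      (by simp [Finsupp.single_apply]; omega)
  have hbc : 1 ≤ m 1 ∧ 1 ≤ m 2 := by omega
  exact hs 1 2 (by simp [Finsupp.single_apply]) (by simp [Finsupp.single_apply]; omega)
    (by simp [Finsupp.single_apply]; omega)

theorem mem_J_of {f : R3 F} (h0 : coeff 0 f = 0) : f ∈ Jid F := by
  rw [f.as_sum]
  apply Ideal.sum_mem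
  intro m hm
  have hm0 : m ≠ 0 := by rintro rfl; exact (mem_support_iff.mp hm) h0
  obtain ⟨i, hi⟩ : ∃ i, m i ≠ 0 := by
    by_contra hc; push_neg at hc
    exact hm0 (Finsupp.ext fun i => hc i)
  have : (monomial m (coeff m f) : R3 F) = monomial (m - e i) (coeff m f) * X i := by
    rw [hX, monomial_mul, mul_one, tsub_add_cancel_of_le (Finsupp.single_le_iff.mpr (by omega))]
  rw [this]
  exact Ideal.mul_mem_left _ _ (X_mem_J i)

theorem mem_J2_of {f : R3 F} (h0 : coeff 0 f = 0) (h : ∀ i, coeff (e i) f = 0) :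
    f ∈ (Jid F) ^ 2 := by
  rw [f.as_sum]
  apply Ideal.sum_mem
  intro m hm
  apply monomial_mem_J_pow2
  have h1 : m ≠ 0 := by rintro rfl; exact (mem_support_iff.mp hm) h0
  have h2 : ∀ i, m ≠ e i := fun i hi => (mem_support_iff.mp hm) (hi ▸ h i)
  by_contra hlt
  push_neg at hlt
  have hcase : (m 0 = 0 ∧ m 1 = 0 ∧ m 2 = 0) ∨ (m 0 = 1 ∧ m 1 = 0 ∧ m 2 = 0) ∨
      (m 0 = 0 ∧ m 1 = 1 ∧ m 2 = 0) ∨ (m 0 = 0 ∧ m 1 = 0 ∧ m 2 = 1) := by omega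
  have hext : ∀ (k : Fin 3) (n : ℕ), m k = Finsupp.single k n k → (∀ j, j ≠ k → m j = 0) →
      m = Finsupp.single k n := by
    intro k n hk hj
    ext j
    by_cases hjk : j = k
    · subst hjk; simpa using hk
    · rw [hj j hjk, Finsupp.single_apply, if_neg (fun h => hjk h.symm)]
  rcases hcase with ⟨a,b,c⟩ | ⟨a,b,c⟩ | ⟨a,b,c⟩ | ⟨a,b,c⟩
  · exact h1 (Finsupp.ext fun i => by fin_cases i <;> simpa)
  · exact h2 0 (hext 0 1 (by simpa using a) (fun j hj => by fin_cases j <;> simp_all))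
  · exact h2 1 (hext 1 1 (by simpa using b) (fun j hj => by fin_cases j <;> simp_all))
  · exact h2 2 (hext 2 1 (by simpa using c) (fun j hj => by fin_cases j <;> simp_all))

/-- the exponent set of the generators of `Isp` -/
noncomputable def DI : Set (Fin 3 →₀ ℕ) :=
  {Finsupp.single 0 2, Finsupp.single 1 2 + Finsupp.single 2 1,
   Finsupp.single 1 1 + Finsupp.single 2 2, Finsupp.single 1 3, Finsupp.single 2 3}

theorem I_eq : Isp F = Ideal.span ((fun d => (monomial d (1 : F) : R3 F)) '' DI) := by
  have h1 : (X 0 : R3 F) ^ 2 = monomial (Finsupp.single 0 2) 1 := X_pow_eq_monomial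
  have h2 : (X 1 : R3 F) ^ 2 * X 2 = monomial (Finsupp.single 1 2 + Finsupp.single 2 1) 1 := by
    rw [X_pow_eq_monomial, hX 2, monomial_mul, one_mul]
  have h3 : (X 1 : R3 F) * X 2 ^ 2 = monomial (Finsupp.single 1 1 + Finsupp.single 2 2) 1 := by
    rw [X_pow_eq_monomial, hX 1, monomial_mul, one_mul]
  have h4 : (X 1 : R3 F) ^ 3 = monomial (Finsupp.single 1 3) 1 := X_pow_eq_monomial
  have h5 : (X 2 : R3 F) ^ 3 = monomial (Finsupp.single 2 3) 1 := X_pow_eq_monomial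
  rw [Isp, DI]
  congr 1
  simp only [Set.image_insert_eq, Set.image_singleton, h1, h2, h3, h4, h5]

theorem gen_mem_DI_span {d : Fin 3 →₀ ℕ} (hd : d ∈ DI) :
    (monomial d (1 : F) : R3 F) ∈ Isp F := by
  rw [I_eq]; exact Ideal.subset_span ⟨d, hd, rfl⟩

theorem not_DI_le {m : Fin 3 →₀ ℕ} (h0 : m 0 ≤ 1) (h12 : m 1 + m 2 ≤ 2) :
    ∀ d ∈ DI, ¬ d ≤ m := by
  intro d hd hle
  simp only [DI, Set.mem_insert_iff, Set.mem_singleton_iff] at hd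
  have c0 := Finsupp.le_def.mp hle 0
  have c1 := Finsupp.le_def.mp hle 1
  have c2 := Finsupp.le_def.mp hle 2
  rcases hd with rfl | rfl | rfl | rfl | rfl <;>
    simp only [Finsupp.add_apply, Finsupp.single_apply] at c0 c1 c2 <;>
    simp_all <;> omega

theorem I_le_J : Isp F ≤ Jid F := by
  rw [Ideal.span_le]
  rintro f hf
  simp only [Set.mem_insert_iff, Set.mem_singleton_iff] at hf
  rcases hf with rfl | rfl | rfl | rfl | rfl
  · show (X 0 : R3 F) ^ 2 ∈ Jid F
    rw [sq]; exact Ideal.mul_mem_left _ _ (X_mem_J 0)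
  · exact Ideal.mul_mem_left _ _ (X_mem_J 2)
  · show (X 1 : R3 F) * X 2 ^ 2 ∈ Jid F
    rw [show (X 1 : R3 F) * X 2 ^ 2 = (X 1 * X 2) * X 2 by ring]
    exact Ideal.mul_mem_left _ _ (X_mem_J 2)
  · show (X 1 : R3 F) ^ 3 ∈ Jid F
    rw [show (X 1 : R3 F) ^ 3 = (X 1 ^ 2) * X 1 by ring]
    exact Ideal.mul_mem_left _ _ (X_mem_J 1)
  · show (X 2 : R3 F) ^ 3 ∈ Jid F
    rw [show (X 2 : R3 F) ^ 3 = (X 2 ^ 2) * X 2 by ring]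
    exact Ideal.mul_mem_left _ _ (X_mem_J 2)

theorem le_drop0 {d m : Fin 3 →₀ ℕ} (hd0 : d 0 = 0) (h : d ≤ m + e 0) : d ≤ m := by
  refine le_of_coords (by omega) ?_ ?_
  · have := Finsupp.le_def.mp h 1
    simpa [Finsupp.single_apply] using this
  · have := Finsupp.le_def.mp h 2
    simpa [Finsupp.single_apply] using this

theorem L2 {p : R3 F} (h : p * X 0 ∈ Isp F) :
    p ∈ Ideal.span {(X 0 : R3 F)} ⊔ Isp F := by
  rw [p.as_sum]
  apply Ideal.sum_mem
  intro m hm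
  by_cases h0 : m 0 = 0
  · by_cases hd : (Finsupp.single 1 2 + Finsupp.single 2 1 ≤ m) ∨
        (Finsupp.single 1 1 + Finsupp.single 2 2 ≤ m) ∨
        (Finsupp.single 1 3 ≤ m) ∨ ((Finsupp.single 2 3 : Fin 3 →₀ ℕ) ≤ m)
    · apply Ideal.mem_sup_right
      obtain ⟨d, hdDI, hdm⟩ : ∃ d ∈ DI, d ≤ m := by
        rcases hd with h' | h' | h' | h'
        exacts [⟨_, by simp [DI], h'⟩, ⟨_, by simp [DI], h'⟩, ⟨_, by simp [DI], h'⟩,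
          ⟨_, by simp [DI], h'⟩]
      have heq : (monomial m (coeff m p) : R3 F) =
          monomial (m - d) (coeff m p) * monomial d 1 := by
        rw [monomial_mul, mul_one, tsub_add_cancel_of_le hdm]
      rw [heq]
      exact Ideal.mul_mem_left _ _ (gen_mem_DI_span hdDI)
    · exfalso
      push_neg at hd
      obtain ⟨h1, h2, h3, h4⟩ := hd
      have hz : coeff m p = 0 := by
        rw [← coeff_mul_X m 0 p]
        apply coeff_span_monomial_eq_zero (I_eq (F := F) ▸ h)
        intro d hdDI hle
        simp only [DI, Set.mem_insert_iff, Set.mem_singleton_iff] at hdDI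
        rcases hdDI with rfl | rfl | rfl | rfl | rfl
        · have := Finsupp.le_def.mp hle 0
          simp only [Finsupp.add_apply, Finsupp.single_apply] at this
          simp_all
        · exact h1 (le_drop0 (by simp [Finsupp.single_apply]) hle)
        · exact h2 (le_drop0 (by simp [Finsupp.single_apply]) hle)
        · exact h3 (le_drop0 (by simp [Finsupp.single_apply]) hle)
        · exact h4 (le_drop0 (by simp [Finsupp.single_apply]) hle)
      exact (mem_support_iff.mp hm) hz
  · apply Ideal.mem_sup_left
    have heq : (monomial m (coeff m p) : R3 F) = monomial (m - e 0) (coeff m p) * X 0 := by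
      rw [hX, monomial_mul, mul_one,
        tsub_add_cancel_of_le (Finsupp.single_le_iff.mpr (by omega))]
    rw [heq]
    exact Ideal.mul_mem_left _ _ (Ideal.subset_span rfl)

theorem n_eq : Ideal.map (Ideal.Quotient.mk (Isp F)) (Jid F) = n12 F := by
  rw [Jid, Ideal.map_span, n12]
  congr 1
  rw [Set.image_insert_eq, Set.image_insert_eq, Set.image_singleton]

end Stmt12Aux

namespace Stmt12Aux
variable {F : Type u} [Field F]

theorem x_ne_zero : (Ideal.Quotient.mk (Isp F)) (X 0) ≠ 0 := by
  intro h
  rw [Ideal.Quotient.eq_zero_iff_mem] at h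
  have hz := coeff_span_monomial_eq_zero (I_eq (F := F) ▸ h) (e 0)
    (not_DI_le (by simp) (by simp [Finsupp.single_apply]))
  rw [hX 0, coeff_monomial, if_pos rfl] at hz
  exact one_ne_zero hz

theorem x_not_unit : ¬ IsUnit ((Ideal.Quotient.mk (Isp F)) (X 0)) := by
  intro hu
  have hker : Isp F ≤ RingHom.ker ((aeval (fun _ => (0 : F)) : R3 F →ₐ[F] F) : R3 F →+* F) := by
    rw [Ideal.span_le]
    rintro f hf
    simp only [Set.mem_insert_iff, Set.mem_singleton_iff] at hf
    rcases hf with rfl | rfl | rfl | rfl | rfl <;> simp [RingHom.mem_ker]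
  let ε : S12 F →+* F := Ideal.Quotient.lift (Isp F) _ hker
  have h0 : ε ((Ideal.Quotient.mk (Isp F)) (X 0)) = 0 := by
    simp [ε, Ideal.Quotient.lift_mk]
  have := hu.map ε
  rw [h0] at this
  exact one_ne_zero (isUnit_zero_iff.mp this).symm

theorem ann_x : annIdeal (S12 F) ((Ideal.Quotient.mk (Isp F)) (X 0)) =
    Ideal.span {(Ideal.Quotient.mk (Isp F)) (X 0)} := by
  apply le_antisymm
  · intro a ha
    rw [annIdeal, LinearMap.mem_ker, LinearMap.mulLeft_apply] at ha
    obtain ⟨p, rfl⟩ := Ideal.Quotient.mk_surjective a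
    have hmem : (X 0 : R3 F) * p ∈ Isp F := by
      rw [← Ideal.Quotient.eq_zero_iff_mem, map_mul]
      exact ha
    have h2 := L2 (show p * X 0 ∈ Isp F from mul_comm (X 0 : R3 F) p ▸ hmem)
    have h3 : (Ideal.Quotient.mk (Isp F)) p ∈
        Ideal.map (Ideal.Quotient.mk (Isp F)) (Ideal.span {(X 0 : R3 F)} ⊔ Isp F) :=
      Ideal.mem_map_of_mem _ h2
    rw [Ideal.map_sup, Ideal.map_span, Set.image_singleton] at h3
    have h4 : Ideal.span {(Ideal.Quotient.mk (Isp F)) (X 0)} ⊔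
        Ideal.map (Ideal.Quotient.mk (Isp F)) (Isp F) ≤
        Ideal.span {(Ideal.Quotient.mk (Isp F)) (X 0)} := by
      refine sup_le le_rfl ?_
      rw [Ideal.map_le_iff_le_comap]
      intro f hf
      rw [Ideal.mem_comap, Ideal.Quotient.eq_zero_iff_mem.mpr hf]
      exact zero_mem _
    exact h4 h3
  · rw [Ideal.span_le]
    rintro s rfl
    rw [SetLike.mem_coe, annIdeal, LinearMap.mem_ker, LinearMap.mulLeft_apply, ← map_mul,
      ← sq, Ideal.Quotient.eq_zero_iff_mem]
    exact Ideal.subset_span (by simp)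

end Stmt12Aux

namespace Stmt12Aux
variable {F : Type u} [Field F]

noncomputable def Lf (q : R3 F) : R3 F :=
  monomial (e 0) (coeff (e 0) q) + monomial (e 1) (coeff (e 1) q) +
    monomial (e 2) (coeff (e 2) q)

theorem monomial_e_mem_J (j : Fin 3) (c : F) : (monomial (e j) c : R3 F) ∈ Jid F := by
  rw [show (monomial (e j) c : R3 F) = C c * X j by rw [hX, C_mul_monomial, mul_one]]
  exact Ideal.mul_mem_left _ _ (X_mem_J j)

theorem Lf_mem_J (q : R3 F) : Lf q ∈ Jid F :=
  add_mem (add_mem (monomial_e_mem_J 0 _) (monomial_e_mem_J 1 _)) (monomial_e_mem_J 2 _)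

theorem coeff_zero_mono (j : Fin 3) (c : F) : coeff 0 (monomial (e j) c : R3 F) = 0 := by
  rw [coeff_monomial, if_neg]
  simp

theorem coeff_zero_Lf (q : R3 F) : coeff 0 (Lf q) = 0 := by
  rw [Lf, coeff_add, coeff_add, coeff_zero_mono, coeff_zero_mono, coeff_zero_mono]
  ring

theorem coeff_e_mono (i j : Fin 3) (c : F) :
    coeff (e i) (monomial (e j) c : R3 F) = if j = i then c else 0 := by
  rcases eq_or_ne j i with rfl | h
  · rw [coeff_monomial, if_pos rfl, if_pos rfl]
  · rw [coeff_monomial, if_neg, if_neg h]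
    simp [Finsupp.single_eq_single_iff, h]

theorem coeff_e_Lf (q : R3 F) (i : Fin 3) : coeff (e i) (Lf q) = coeff (e i) q := by
  rw [Lf, coeff_add, coeff_add, coeff_e_mono, coeff_e_mono, coeff_e_mono]
  fin_cases i <;> simp

theorem sub_Lf_mem_J2 {q : R3 F} (h0 : coeff 0 q = 0) : q - Lf q ∈ (Jid F) ^ 2 :=
  mem_J2_of (by rw [coeff_sub, h0, coeff_zero_Lf, sub_zero])
    (fun i => by rw [coeff_sub, coeff_e_Lf, sub_self])

theorem coeff_mul_mono_ne {q : R3 F} {m : Fin 3 →₀ ℕ} {j : Fin 3} (c : F) (h : m j = 0) :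
    coeff m (q * monomial (e j) c) = 0 := by
  rw [coeff_mul_monomial', if_neg]
  rw [Finsupp.single_le_iff]
  omega

theorem coeff_mul_Lf (g w : R3 F) (m : Fin 3 →₀ ℕ) :
    coeff m (g * Lf w) = coeff m (g * monomial (e 0) (coeff (e 0) w)) +
      coeff m (g * monomial (e 1) (coeff (e 1) w)) +
      coeff m (g * monomial (e 2) (coeff (e 2) w)) := by
  rw [Lf, mul_add, mul_add, coeff_add, coeff_add]

theorem coeff_LL_11 (q w : R3 F) :
    coeff (e 1 + e 1) (Lf q * Lf w) = coeff (e 1) q * coeff (e 1) w := by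
  rw [coeff_mul_Lf,
    coeff_mul_mono_ne _ (show ((e 1 + e 1 : Fin 3 →₀ ℕ)) 0 = 0 by
      simp [Finsupp.single_apply]),
    coeff_mul_mono_ne _ (show ((e 1 + e 1 : Fin 3 →₀ ℕ)) 2 = 0 by
      simp [Finsupp.single_apply]),
    coeff_mul_monomial, coeff_e_Lf]
  ring

theorem coeff_LL_22 (q w : R3 F) :
    coeff (e 2 + e 2) (Lf q * Lf w) = coeff (e 2) q * coeff (e 2) w := by
  rw [coeff_mul_Lf,
    coeff_mul_mono_ne _ (show ((e 2 + e 2 : Fin 3 →₀ ℕ)) 0 = 0 by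
      simp [Finsupp.single_apply]),
    coeff_mul_mono_ne _ (show ((e 2 + e 2 : Fin 3 →₀ ℕ)) 1 = 0 by
      simp [Finsupp.single_apply]),
    coeff_mul_monomial, coeff_e_Lf]
  ring

theorem coeff_LL_12 (q w : R3 F) :
    coeff (e 1 + e 2) (Lf q * Lf w) =
      coeff (e 2) q * coeff (e 1) w + coeff (e 1) q * coeff (e 2) w := by
  rw [coeff_mul_Lf,
    coeff_mul_mono_ne _ (show ((e 1 + e 2 : Fin 3 →₀ ℕ)) 0 = 0 by
      simp [Finsupp.single_apply]),
    coeff_mul_monomial, coeff_e_Lf,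
    show (e 1 + e 2 : Fin 3 →₀ ℕ) = e 2 + e 1 from add_comm _ _,
    coeff_mul_monomial, coeff_e_Lf]
  ring

theorem coeff_LL_01 (q w : R3 F) :
    coeff (e 0 + e 1) (Lf q * Lf w) =
      coeff (e 1) q * coeff (e 0) w + coeff (e 0) q * coeff (e 1) w := by
  rw [coeff_mul_Lf,
    coeff_mul_mono_ne _ (show ((e 0 + e 1 : Fin 3 →₀ ℕ)) 2 = 0 by
      simp [Finsupp.single_apply]),
    coeff_mul_monomial, coeff_e_Lf,
    show (e 0 + e 1 : Fin 3 →₀ ℕ) = e 1 + e 0 from add_comm _ _,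
    coeff_mul_monomial, coeff_e_Lf]
  ring

theorem coeff_LL_02 (q w : R3 F) :
    coeff (e 0 + e 2) (Lf q * Lf w) =
      coeff (e 2) q * coeff (e 0) w + coeff (e 0) q * coeff (e 2) w := by
  rw [coeff_mul_Lf,
    coeff_mul_mono_ne _ (show ((e 0 + e 2 : Fin 3 →₀ ℕ)) 1 = 0 by
      simp [Finsupp.single_apply]),
    coeff_mul_monomial, coeff_e_Lf,
    show (e 0 + e 2 : Fin 3 →₀ ℕ) = e 2 + e 0 from add_comm _ _,
    coeff_mul_monomial, coeff_e_Lf]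
  ring

theorem pair_bound_ok (a b : Fin 3) (h : a ≠ 0 ∨ b ≠ 0) :
    (e a + e b) 0 ≤ 1 ∧ (e a + e b) 1 + (e a + e b) 2 ≤ 2 ∧
      (e a + e b) 0 + (e a + e b) 1 + (e a + e b) 2 < 3 := by
  fin_cases a <;> fin_cases b <;> simp_all [Finsupp.single_apply]

end Stmt12Aux

namespace Stmt12Aux
variable {F : Type u} [Field F]

theorem part2 (v : S12 F) (hv : v ∈ n12 F)
    (hnv : v ∉ Ideal.span {((Ideal.Quotient.mk (Isp F)) (X 0) : S12 F)} + (n12 F) ^ 2) :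
    annIdeal (S12 F) v ≤ (n12 F) ^ 2 := by
  obtain ⟨r, rfl⟩ := Ideal.Quotient.mk_surjective v
  have hr : r ∈ Jid F := by
    have hv' : (Ideal.Quotient.mk (Isp F)) r ∈
        Ideal.map (Ideal.Quotient.mk (Isp F)) (Jid F) := by rw [n_eq]; exact hv
    have hc := Ideal.mem_comap.mpr hv'
    rw [Ideal.comap_map_of_surjective _ Ideal.Quotient.mk_surjective] at hc
    have hle : Jid F ⊔ Ideal.comap (Ideal.Quotient.mk (Isp F)) ⊥ ≤ Jid F := by
      refine sup_le le_rfl ?_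
      rw [← RingHom.ker_eq_comap_bot, Ideal.mk_ker]
      exact I_le_J
    exact hle hc
  have hr0 : coeff 0 r = 0 :=
    coeff_J_pow_eq_zero' (k := 1) (by simpa [pow_one] using hr) (by simp)
  have hβγ : coeff (e 1) r ≠ 0 ∨ coeff (e 2) r ≠ 0 := by
    by_contra hcon
    push_neg at hcon
    obtain ⟨hb, hg⟩ := hcon
    apply hnv
    have hsub : r - C (coeff (e 0) r) * X 0 ∈ (Jid F) ^ 2 := by
      apply mem_J2_of
      · rw [coeff_sub, hr0, hX, C_mul_monomial, mul_one, coeff_zero_mono, sub_zero]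
      · intro i
        rw [coeff_sub, hX, C_mul_monomial, mul_one, coeff_e_mono]
        fin_cases i <;> simp_all
    have hmem : r ∈ Ideal.span {(X 0 : R3 F)} ⊔ (Jid F) ^ 2 := by
      have h1 : C (coeff (e 0) r) * X 0 ∈ Ideal.span {(X 0 : R3 F)} :=
        Ideal.mul_mem_left _ _ (Ideal.subset_span rfl)
      have h2 := add_mem (Ideal.mem_sup_left h1) (Ideal.mem_sup_right hsub)
      simpa using h2
    have h3 := Ideal.mem_map_of_mem (Ideal.Quotient.mk (Isp F)) hmem
    rw [Ideal.map_sup, Ideal.map_span, Set.image_singleton, Ideal.map_pow, n_eq] at h3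
    rwa [Submodule.add_eq_sup]
  intro u hu
  rw [annIdeal, LinearMap.mem_ker, LinearMap.mulLeft_apply] at hu
  obtain ⟨p, rfl⟩ := Ideal.Quotient.mk_surjective u
  have hpr : p * r ∈ Isp F := by
    rw [← Ideal.Quotient.eq_zero_iff_mem, map_mul, mul_comm]
    exact hu
  have hgood : ∀ m : Fin 3 →₀ ℕ, m 0 ≤ 1 → m 1 + m 2 ≤ 2 → coeff m (p * r) = 0 :=
    fun m h0 h12 => coeff_span_monomial_eq_zero (I_eq (F := F) ▸ hpr) m (not_DI_le h0 h12)
  -- stage 1 : the constant coefficient of `p` vanishes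
  have hp' : p - C (coeff 0 p) ∈ Jid F := mem_J_of (by simp)
  have ebound : ∀ i : Fin 3, (e i) 0 ≤ 1 ∧ (e i) 1 + (e i) 2 ≤ 2 ∧
      (e i) 0 + (e i) 1 + (e i) 2 < 2 := by
    intro i; fin_cases i <;> simp [Finsupp.single_apply]
  have key1 : ∀ i : Fin 3, coeff 0 p * coeff (e i) r = 0 := by
    intro i
    have h1 : coeff (e i) ((p - C (coeff 0 p)) * r) = 0 :=
      coeff_J_pow_eq_zero' (by rw [sq]; exact Ideal.mul_mem_mul hp' hr) (ebound i).2.2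
    have h2 := hgood (e i) (ebound i).1 (ebound i).2.1
    rw [show p * r = C (coeff 0 p) * r + (p - C (coeff 0 p)) * r by ring,
      coeff_add, h1, add_zero, coeff_C_mul] at h2
    exact h2
  have hc0 : coeff 0 p = 0 := by
    rcases hβγ with h | h
    · rcases mul_eq_zero.mp (key1 1) with h' | h'
      · exact h'
      · exact absurd h' h
    · rcases mul_eq_zero.mp (key1 2) with h' | h'
      · exact h'
      · exact absurd h' h
  have hpJ : p ∈ Jid F := by simpa [hc0] using hp'
  -- stage 2 : the linear coefficients of `p` vanish
  have hp2 : p - Lf p ∈ (Jid F) ^ 2 := sub_Lf_mem_J2 hc0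
  have hr2 : r - Lf r ∈ (Jid F) ^ 2 := sub_Lf_mem_J2 hr0
  have htail : ∀ m : Fin 3 →₀ ℕ, m 0 + m 1 + m 2 < 3 →
      coeff m (p * r) = coeff m (Lf p * Lf r) := by
    intro m hm
    have h1 : coeff m (Lf p * (r - Lf r)) = 0 :=
      coeff_J_pow_eq_zero' (by
        rw [show ((Jid F) ^ 3 : Ideal (R3 F)) = Jid F * (Jid F) ^ 2 from pow_succ' _ _]
        exact Ideal.mul_mem_mul (Lf_mem_J p) hr2) hm
    have h2 : coeff m ((p - Lf p) * r) = 0 :=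
      coeff_J_pow_eq_zero' (by rw [pow_succ]; exact Ideal.mul_mem_mul hp2 hr) hm
    rw [show p * r = Lf p * Lf r + (Lf p * (r - Lf r) + (p - Lf p) * r) by ring,
      coeff_add, coeff_add, h1, h2]
    ring
  have EE : ∀ a b : Fin 3, a ≠ 0 ∨ b ≠ 0 → coeff (e a + e b) (Lf p * Lf r) = 0 := by
    intro a b hab
    obtain ⟨b1, b2, b3⟩ := pair_bound_ok a b hab
    rw [← htail _ b3]
    exact hgood _ b1 b2
  have E1 : coeff (e 1) p * coeff (e 1) r = 0 := by
    rw [← coeff_LL_11 p r]; exact EE 1 1 (by simp)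
  have E2 : coeff (e 2) p * coeff (e 2) r = 0 := by
    rw [← coeff_LL_22 p r]; exact EE 2 2 (by simp)
  have E3 : coeff (e 2) p * coeff (e 1) r + coeff (e 1) p * coeff (e 2) r = 0 := by
    rw [← coeff_LL_12 p r]; exact EE 1 2 (by simp)
  have E4 : coeff (e 1) p * coeff (e 0) r + coeff (e 0) p * coeff (e 1) r = 0 := by
    rw [← coeff_LL_01 p r]; exact EE 0 1 (by simp)
  have E5 : coeff (e 2) p * coeff (e 0) r + coeff (e 0) p * coeff (e 2) r = 0 := by
    rw [← coeff_LL_02 p r]; exact EE 0 2 (by simp)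
  have hc123 : coeff (e 0) p = 0 ∧ coeff (e 1) p = 0 ∧ coeff (e 2) p = 0 := by
    rcases hβγ with hβ | hγ
    · have solve : ∀ x : F, x * coeff (e 1) r = 0 → x = 0 := fun x hx => by
        rcases mul_eq_zero.mp hx with h' | h'
        · exact h'
        · exact absurd h' hβ
      have h2 : coeff (e 1) p = 0 := solve _ E1
      have h3 : coeff (e 2) p = 0 := solve _ (by
        have := E3; rw [h2, zero_mul, add_zero] at this; exact this)
      have h1 : coeff (e 0) p = 0 := solve _ (by
        have := E4; rw [h2, zero_mul, zero_add] at this; exact this)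
      exact ⟨h1, h2, h3⟩
    · have solve : ∀ x : F, x * coeff (e 2) r = 0 → x = 0 := fun x hx => by
        rcases mul_eq_zero.mp hx with h' | h'
        · exact h'
        · exact absurd h' hγ
      have h3 : coeff (e 2) p = 0 := solve _ E2
      have h2 : coeff (e 1) p = 0 := solve _ (by
        have := E3; rw [h3, zero_mul, zero_add] at this; exact this)
      have h1 : coeff (e 0) p = 0 := solve _ (by
        have := E5; rw [h3, zero_mul, zero_add] at this; exact this)
      exact ⟨h1, h2, h3⟩
  have hLp0 : Lf p = 0 := by
    rw [Lf, hc123.1, hc123.2.1, hc123.2.2]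
    simp
  have hp2' : p ∈ (Jid F) ^ 2 := by
    have := hp2; rwa [hLp0, sub_zero] at this
  have hfin := Ideal.mem_map_of_mem (Ideal.Quotient.mk (Isp F)) hp2'
  rwa [Ideal.map_pow, n_eq] at hfin

end Stmt12Aux

/-- in `S = F[x,y,z]/(x², y²z, yz², y³, z³)` the element `x` is
an exact zero divisor, and for every `v ∈ n \ ((x) + n²)` the annihilator of
`v` is contained in `n²`. -/
theorem stmt12 (F : Type u) [Field F] :
    IsExactZeroDivisor (S12 F) (Ideal.Quotient.mk _ (X 0)) ∧
    ∀ v : S12 F, v ∈ n12 F →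
      v ∉ Ideal.span {(Ideal.Quotient.mk _ (X 0) : S12 F)} + (n12 F) ^ 2 →
      annIdeal (S12 F) v ≤ (n12 F) ^ 2 := by
  constructor
  · exact ⟨Stmt12Aux.x_ne_zero, Stmt12Aux.x_not_unit,
      Ideal.Quotient.mk _ (X 0), Stmt12Aux.ann_x, Stmt12Aux.ann_x⟩
  · intro v hv hnv
    exact Stmt12Aux.part2 v hv hnv
end
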